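/- arXiv:2111.03722 — 4 statements merged into one kernel-verified Lean document; each statement's English description precedes it below -/
import Mathlib

section
/- Let W be an N×N entrywise-nonnegative irreducible real matrix, let λ_E, λ_Is, λ_Ia > 0, β_Is, β_Ia ≥ 0 with β_Is + β_Ia > 0, p_Is, p_Ia ∈ [0,1], and integer shape parameters k_E, k_Is, k_Ia ≥ 1. With Δ = W ⊗ δ and Σ = I_N ⊗ σ as defined, if (β_Is·p_Is·k_Is/λ_Is + β_Ia·p_Ia·k_Ia/λ_Ia)·ρ(W) < 1, then every complex eigenvalue of Δ + Σ has strictly negative real part, i.e., s(Δ + Σ) < 0. -/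
open Matrix Polynomial Kronecker



/-- The set of complex eigenvalues of a real square matrix: the roots of its
characteristic polynomial over `ℂ`. -/
noncomputable def eigSet {n : Type*} [Fintype n] [DecidableEq n] (M : Matrix n n ℝ) : Set ℂ :=
  {z : ℂ | ((M.map (algebraMap ℝ ℂ)).charpoly).IsRoot z}

/-- The spectral bound `s(M)`: the maximum real part of the eigenvalues. -/
noncomputable def specBound {n : Type*} [Fintype n] [DecidableEq n] (M : Matrix n n ℝ) : ℝ :=
  sSup (Complex.re '' eigSet M)

/-- The spectral radius `ρ(M)`: the maximum modulus of the eigenvalues. -/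
noncomputable def specRadius {n : Type*} [Fintype n] [DecidableEq n] (M : Matrix n n ℝ) : ℝ :=
  sSup ((fun z : ℂ => ‖z‖) '' eigSet M)

/-- `H_k`: `-1` on the diagonal, `1` on the first subdiagonal, `0` elsewhere. -/
def Hmat (k : ℕ) : Matrix (Fin k) (Fin k) ℝ :=
  Matrix.of fun i j => if (i : ℕ) = (j : ℕ) then -1 else if (i : ℕ) = (j : ℕ) + 1 then 1 else 0

/-- `F_k`: lower triangular matrix with all entries on and below the diagonal equal to `1`. -/
def Fmat (k : ℕ) : Matrix (Fin k) (Fin k) ℝ :=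
  Matrix.of fun i j => if (j : ℕ) ≤ (i : ℕ) then 1 else 0

/-- `G_{k₁,k₂}`: `1` in the upper-right corner, `0` elsewhere. -/
def Gmat (k1 k2 : ℕ) : Matrix (Fin k1) (Fin k2) ℝ :=
  Matrix.of fun i j => if (i : ℕ) = 0 ∧ (j : ℕ) = k2 - 1 then 1 else 0

/-- `J_{k₁,k₂}`: the all-ones matrix. -/
def Jmat (k1 k2 : ℕ) : Matrix (Fin k1) (Fin k2) ℝ :=
  Matrix.of fun _ _ => 1

/-- The block matrix σ with row/column blocks of sizes `(k_E, k_Is, k_Ia)`: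
`σ = [[λ_E·H_{k_E}, 0, 0], [p_Is·λ_E·G_{k_Is,k_E}, λ_Is·H_{k_Is}, 0],
      [p_Ia·λ_E·G_{k_Ia,k_E}, 0, λ_Ia·H_{k_Ia}]]`. -/
noncomputable def sigmaMat (lE lIs lIa pIs pIa : ℝ) (kE kIs kIa : ℕ) :
    Matrix (Fin kE ⊕ (Fin kIs ⊕ Fin kIa)) (Fin kE ⊕ (Fin kIs ⊕ Fin kIa)) ℝ :=
  Matrix.fromBlocks (lE • Hmat kE) 0
    (Matrix.fromRows ((pIs * lE) • Gmat kIs kE) ((pIa * lE) • Gmat kIa kE))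
    (Matrix.fromBlocks (lIs • Hmat kIs) 0 0 (lIa • Hmat kIa))

/-- The matrix δ: its first row is `(0,…,0, β_Is,…,β_Is, β_Ia,…,β_Ia)` (with `k_E` zeros,
`k_Is` copies of `β_Is`, `k_Ia` copies of `β_Ia`), and all other rows are zero. -/
def deltaMat (bIs bIa : ℝ) (kE kIs kIa : ℕ) :
    Matrix (Fin kE ⊕ (Fin kIs ⊕ Fin kIa)) (Fin kE ⊕ (Fin kIs ⊕ Fin kIa)) ℝ :=
  Matrix.of fun i j =>
    Sum.elim
      (fun i1 : Fin kE =>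
        if (i1 : ℕ) = 0 then
          Sum.elim (fun _ : Fin kE => (0 : ℝ))
            (Sum.elim (fun _ : Fin kIs => bIs) (fun _ : Fin kIa => bIa)) j
        else 0)
      (fun _ => 0) i


lemma charpoly_isRoot_iff {n : Type*} [Fintype n] [DecidableEq n] (M : Matrix n n ℂ) (z : ℂ) :
    M.charpoly.IsRoot z ↔ (z • (1 : Matrix n n ℂ) - M).det = 0 := by
  have h1 : Polynomial.eval z M.charpoly
      = ((M.charmatrix).map (Polynomial.evalRingHom z)).det := by
    rw [Matrix.charpoly,
      show eval z M.charmatrix.det = (evalRingHom z) M.charmatrix.det from rfl,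
      RingHom.map_det]
    rfl
  have h2 : (M.charmatrix).map (Polynomial.evalRingHom z) = z • (1 : Matrix n n ℂ) - M := by
    ext i j
    by_cases h : i = j
    · subst h
      simp [Matrix.charmatrix_apply_eq, Matrix.map_apply, Matrix.one_apply]
    · simp [Matrix.charmatrix_apply_ne _ _ _ h, Matrix.map_apply, Matrix.one_apply, h]
  rw [Polynomial.IsRoot, h1, h2]

lemma Hsum {k : ℕ} (i : Fin k) (w : Fin k → ℂ) :
    ∑ j, ((Hmat k i j : ℝ) : ℂ) * w j
      = (if h : (i : ℕ) = 0 then 0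
          else w ⟨(i : ℕ) - 1, lt_of_le_of_lt (Nat.sub_le _ _) i.isLt⟩) - w i := by
  rcases Nat.eq_zero_or_pos (i : ℕ) with h0 | h0
  · rw [dif_pos h0]
    have hpt : ∀ j : Fin k, ((Hmat k i j : ℝ) : ℂ) * w j = if j = i then -w j else 0 := by
      intro j
      by_cases h : j = i
      · subst h; simp [Hmat]
      · have h1 : (i : ℕ) ≠ (j : ℕ) := fun hc => h (Fin.ext hc.symm)
        have h2 : (i : ℕ) ≠ (j : ℕ) + 1 := by omega
        simp [Hmat, h1, h2, if_neg h]
    rw [Finset.sum_congr rfl fun j _ => hpt j, Finset.sum_ite_eq' Finset.univ i (fun j => -w j)]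
    simp
  · set ip : Fin k := ⟨(i : ℕ) - 1, lt_of_le_of_lt (Nat.sub_le _ _) i.isLt⟩ with hip
    rw [dif_neg (Nat.pos_iff_ne_zero.mp h0)]
    have hpt : ∀ j : Fin k, ((Hmat k i j : ℝ) : ℂ) * w j
        = (if j = i then -w j else 0) + (if j = ip then w j else 0) := by
      intro j
      by_cases h : j = i
      · subst h
        have hne : j ≠ ip := by
          intro hc
          have := congrArg Fin.val hc
          simp only [hip] at this
          omega
        simp [Hmat, if_neg hne]
      · by_cases h' : j = ip
        · have h1 : (i : ℕ) ≠ (j : ℕ) := fun hc => h (Fin.ext hc.symm)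
          have h2 : (i : ℕ) = (j : ℕ) + 1 := by
            have := congrArg Fin.val h'
            simp only [hip] at this
            omega
          simp [Hmat, h1, h2, if_pos h', if_neg h]
        · have h1 : (i : ℕ) ≠ (j : ℕ) := fun hc => h (Fin.ext hc.symm)
          have h2 : (i : ℕ) ≠ (j : ℕ) + 1 := by
            intro hc
            apply h'
            apply Fin.ext
            simp only [hip]
            omega
          simp [Hmat, h1, h2, if_neg h, if_neg h']
    rw [Finset.sum_congr rfl fun j _ => hpt j, Finset.sum_add_distrib,
      Finset.sum_ite_eq' Finset.univ i (fun j => -w j),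
      Finset.sum_ite_eq' Finset.univ ip (fun j => w j)]
    simp [add_comm, sub_eq_add_neg]

lemma Gsum {k1 k2 : ℕ} (h2 : 0 < k2) (i : Fin k1) (w : Fin k2 → ℂ) :
    ∑ j, ((Gmat k1 k2 i j : ℝ) : ℂ) * w j
      = if (i : ℕ) = 0 then w ⟨k2 - 1, Nat.sub_lt h2 one_pos⟩ else 0 := by
  set jp : Fin k2 := ⟨k2 - 1, Nat.sub_lt h2 one_pos⟩ with hjp
  have hpt : ∀ j : Fin k2, ((Gmat k1 k2 i j : ℝ) : ℂ) * w j
      = if j = jp then (if (i : ℕ) = 0 then w j else 0) else 0 := by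
    intro j
    by_cases h : j = jp
    · subst h
      by_cases hi : (i : ℕ) = 0 <;> simp [Gmat, hi, hjp]
    · have : ¬((i : ℕ) = 0 ∧ (j : ℕ) = k2 - 1) := by
        rintro ⟨-, hc⟩
        exact h (Fin.ext (by simp [hjp, hc]))
      simp [Gmat, this, h]
  rw [Finset.sum_congr rfl fun j _ => hpt j,
    Finset.sum_ite_eq' Finset.univ jp (fun j => if (i : ℕ) = 0 then w j else 0)]
  simp

lemma abs_le_specRadius {n : Type*} [Fintype n] [DecidableEq n] (W : Matrix n n ℝ) (μ : ℂ)
    (u : n → ℂ) (hu : u ≠ 0) (h : (W.map (algebraMap ℝ ℂ)) *ᵥ u = μ • u) :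
    ‖μ‖ ≤ specRadius W := by
  have hroot : μ ∈ eigSet W := by
    rw [eigSet, Set.mem_setOf_eq, charpoly_isRoot_iff, ← Matrix.exists_mulVec_eq_zero_iff]
    refine ⟨u, hu, ?_⟩
    rw [Matrix.sub_mulVec, Matrix.smul_mulVec, Matrix.one_mulVec, h, sub_self]
  have hfin : (eigSet W).Finite :=
    Polynomial.finite_setOf_isRoot (Matrix.charpoly_monic _).ne_zero
  exact le_csSup ((hfin.image _).bddAbove) ⟨μ, hroot, rfl⟩


/-- Under the epidemic-threshold condition, every complex eigenvalue of
`Δ + Σ` has strictly negative real part, i.e. `s(Δ + Σ) < 0`. -/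
theorem stmt0 {N : ℕ} (W : Matrix (Fin N) (Fin N) ℝ)
    (hWnonneg : ∀ i j, 0 ≤ W i j)
    (hWirr : ∀ i j, ∃ n : ℕ, 1 ≤ n ∧ 0 < (W ^ n) i j)
    (lE lIs lIa : ℝ) (hlE : 0 < lE) (hlIs : 0 < lIs) (hlIa : 0 < lIa)
    (bIs bIa : ℝ) (hbIs : 0 ≤ bIs) (hbIa : 0 ≤ bIa) (hbpos : 0 < bIs + bIa)
    (pIs pIa : ℝ) (hpIs : pIs ∈ Set.Icc (0 : ℝ) 1) (hpIa : pIa ∈ Set.Icc (0 : ℝ) 1)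
    (kE kIs kIa : ℕ) (hkE : 1 ≤ kE) (hkIs : 1 ≤ kIs) (hkIa : 1 ≤ kIa)
    (hthr : (bIs * pIs * (kIs : ℝ) / lIs + bIa * pIa * (kIa : ℝ) / lIa) * specRadius W < 1) :
    ∀ z ∈ eigSet (W ⊗ₖ deltaMat bIs bIa kE kIs kIa +
        (1 : Matrix (Fin N) (Fin N) ℝ) ⊗ₖ sigmaMat lE lIs lIa pIs pIa kE kIs kIa),
      z.re < 0 := by
  intro z hz
  by_contra hneg
  have hzre : 0 ≤ z.re := not_lt.mp hneg
  classical
  set Mre := W ⊗ₖ deltaMat bIs bIa kE kIs kIa +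
      (1 : Matrix (Fin N) (Fin N) ℝ) ⊗ₖ sigmaMat lE lIs lIa pIs pIa kE kIs kIa with hMre
  set A := Mre.map (algebraMap ℝ ℂ) with hA
  have hdet : (z • (1 : Matrix _ _ ℂ) - A).det = 0 := (charpoly_isRoot_iff A z).mp hz
  obtain ⟨v, hvne, hveq⟩ := Matrix.exists_mulVec_eq_zero_iff.mpr hdet
  have hveq2 : A *ᵥ v = z • v := by
    have h1 : z • ((1 : Matrix _ _ ℂ) *ᵥ v) - A *ᵥ v = 0 := by
      rw [← Matrix.smul_mulVec, ← Matrix.sub_mulVec]; exact hveq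
    rw [Matrix.one_mulVec] at h1
    exact (sub_eq_zero.mp h1).symm
  have hv : ∀ (a : Fin N) (i0 : Fin kE ⊕ (Fin kIs ⊕ Fin kIa)),
      z * v (a, i0) = ∑ b, ∑ j0 : Fin kE ⊕ (Fin kIs ⊕ Fin kIa),
        ((Mre (a, i0) (b, j0) : ℝ) : ℂ) * v (b, j0) := by
    intro a i0
    have h1 := congrFun hveq2 (a, i0)
    rw [Matrix.mulVec] at h1
    simp only [dotProduct, Fintype.sum_prod_type, hA, Matrix.map_apply,
      Pi.smul_apply, smul_eq_mul, Complex.coe_algebraMap] at h1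
    exact h1.symm
  have entryEE : ∀ (a b : Fin N) (i j : Fin kE),
      Mre (a, Sum.inl i) (b, Sum.inl j) = if a = b then lE * Hmat kE i j else 0 := by
    intro a b i j
    simp [hMre, Matrix.kroneckerMap_apply, deltaMat, sigmaMat, Matrix.one_apply,
      Matrix.fromBlocks_apply₁₁, ite_mul, one_mul, zero_mul]
  have entryEIs : ∀ (a b : Fin N) (i : Fin kE) (j : Fin kIs),
      Mre (a, Sum.inl i) (b, Sum.inr (Sum.inl j)) = W a b * (if (i : ℕ) = 0 then bIs else 0) := by
    intro a b i j
    simp [hMre, Matrix.kroneckerMap_apply, deltaMat, sigmaMat, Matrix.one_apply,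
      Matrix.fromBlocks_apply₁₂, apply_ite (W a b * ·), mul_ite, mul_zero]
  have entryEIa : ∀ (a b : Fin N) (i : Fin kE) (j : Fin kIa),
      Mre (a, Sum.inl i) (b, Sum.inr (Sum.inr j)) = W a b * (if (i : ℕ) = 0 then bIa else 0) := by
    intro a b i j
    simp [hMre, Matrix.kroneckerMap_apply, deltaMat, sigmaMat, Matrix.one_apply,
      Matrix.fromBlocks_apply₁₂, mul_ite, mul_zero]
  have entryIsE : ∀ (a b : Fin N) (i : Fin kIs) (j : Fin kE),
      Mre (a, Sum.inr (Sum.inl i)) (b, Sum.inl j)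
        = if a = b then pIs * lE * Gmat kIs kE i j else 0 := by
    intro a b i j
    simp [hMre, Matrix.kroneckerMap_apply, deltaMat, sigmaMat, Matrix.one_apply,
      Matrix.fromBlocks_apply₂₁, Matrix.fromRows_apply_inl, ite_mul, one_mul, zero_mul]
  have entryIsIs : ∀ (a b : Fin N) (i j : Fin kIs),
      Mre (a, Sum.inr (Sum.inl i)) (b, Sum.inr (Sum.inl j))
        = if a = b then lIs * Hmat kIs i j else 0 := by
    intro a b i j
    simp [hMre, Matrix.kroneckerMap_apply, deltaMat, sigmaMat, Matrix.one_apply,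
      Matrix.fromBlocks_apply₂₂, Matrix.fromBlocks_apply₁₁, ite_mul, one_mul, zero_mul]
  have entryIsIa : ∀ (a b : Fin N) (i : Fin kIs) (j : Fin kIa),
      Mre (a, Sum.inr (Sum.inl i)) (b, Sum.inr (Sum.inr j)) = 0 := by
    intro a b i j
    simp [hMre, Matrix.kroneckerMap_apply, deltaMat, sigmaMat,
      Matrix.fromBlocks_apply₂₂, Matrix.fromBlocks_apply₁₂]
  have entryIaE : ∀ (a b : Fin N) (i : Fin kIa) (j : Fin kE),
      Mre (a, Sum.inr (Sum.inr i)) (b, Sum.inl j)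
        = if a = b then pIa * lE * Gmat kIa kE i j else 0 := by
    intro a b i j
    simp [hMre, Matrix.kroneckerMap_apply, deltaMat, sigmaMat, Matrix.one_apply,
      Matrix.fromBlocks_apply₂₁, Matrix.fromRows_apply_inr, ite_mul, one_mul, zero_mul]
  have entryIaIs : ∀ (a b : Fin N) (i : Fin kIa) (j : Fin kIs),
      Mre (a, Sum.inr (Sum.inr i)) (b, Sum.inr (Sum.inl j)) = 0 := by
    intro a b i j
    simp [hMre, Matrix.kroneckerMap_apply, deltaMat, sigmaMat,
      Matrix.fromBlocks_apply₂₂, Matrix.fromBlocks_apply₂₁]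
  have entryIaIa : ∀ (a b : Fin N) (i j : Fin kIa),
      Mre (a, Sum.inr (Sum.inr i)) (b, Sum.inr (Sum.inr j))
        = if a = b then lIa * Hmat kIa i j else 0 := by
    intro a b i j
    simp [hMre, Matrix.kroneckerMap_apply, deltaMat, sigmaMat, Matrix.one_apply,
      Matrix.fromBlocks_apply₂₂, ite_mul, one_mul, zero_mul]
  have eqE : ∀ (a : Fin N) (i : Fin kE),
      z * v (a, Sum.inl i) =
        (lE : ℂ) * ((if h : (i : ℕ) = 0 then 0
            else v (a, Sum.inl ⟨(i : ℕ) - 1, lt_of_le_of_lt (Nat.sub_le _ _) i.isLt⟩))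
          - v (a, Sum.inl i)) +
        ((if (i : ℕ) = 0 then
            ∑ x, (W a x : ℂ) * ((bIs : ℂ) * ∑ j : Fin kIs, v (x, Sum.inr (Sum.inl j))) else 0) +
          if (i : ℕ) = 0 then
            ∑ x, (W a x : ℂ) * ((bIa : ℂ) * ∑ j : Fin kIa, v (x, Sum.inr (Sum.inr j))) else 0) := by
    intro a i
    have h0 := hv a (Sum.inl i)
    simp only [Fintype.sum_sum_type] at h0
    simp only [entryEE, entryEIs, entryEIa] at h0
    simp only [apply_ite Complex.ofReal, Complex.ofReal_zero, Complex.ofReal_mul,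
      ite_mul, zero_mul, mul_ite, mul_zero, Finset.sum_ite_irrel, Finset.sum_const_zero] at h0
    rw [Finset.sum_add_distrib, Finset.sum_add_distrib] at h0
    simp only [Finset.sum_ite_irrel, Finset.sum_const_zero, Finset.sum_ite_eq,
      Finset.mem_univ, if_true] at h0
    simp only [mul_assoc, ← Finset.mul_sum] at h0
    rw [Hsum i (fun j => v (a, Sum.inl j))] at h0
    exact h0
  have eqIs : ∀ (a : Fin N) (i : Fin kIs),
      z * v (a, Sum.inr (Sum.inl i)) =
        (pIs : ℂ) * ((lE : ℂ) * if (i : ℕ) = 0 then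
            v (a, Sum.inl ⟨kE - 1, Nat.sub_lt (lt_of_lt_of_le one_pos hkE) one_pos⟩) else 0) +
          (lIs : ℂ) * ((if h : (i : ℕ) = 0 then 0
              else v (a, Sum.inr (Sum.inl ⟨(i : ℕ) - 1, lt_of_le_of_lt (Nat.sub_le _ _) i.isLt⟩)))
            - v (a, Sum.inr (Sum.inl i))) := by
    intro a i
    have h0 := hv a (Sum.inr (Sum.inl i))
    simp only [Fintype.sum_sum_type] at h0
    simp only [entryIsE, entryIsIs, entryIsIa] at h0
    simp only [apply_ite Complex.ofReal, Complex.ofReal_zero, Complex.ofReal_mul,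
      ite_mul, zero_mul, mul_ite, mul_zero, Finset.sum_ite_irrel, Finset.sum_const_zero] at h0
    rw [Finset.sum_add_distrib, Finset.sum_add_distrib] at h0
    simp only [Finset.sum_ite_irrel, Finset.sum_const_zero, Finset.sum_ite_eq,
      Finset.mem_univ, if_true, add_zero] at h0
    simp only [mul_assoc, ← Finset.mul_sum] at h0
    rw [Hsum i (fun j => v (a, Sum.inr (Sum.inl j))),
      Gsum (lt_of_lt_of_le one_pos hkE) i (fun j => v (a, Sum.inl j))] at h0
    exact h0
  have eqIa : ∀ (a : Fin N) (i : Fin kIa),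
      z * v (a, Sum.inr (Sum.inr i)) =
        (pIa : ℂ) * ((lE : ℂ) * if (i : ℕ) = 0 then
            v (a, Sum.inl ⟨kE - 1, Nat.sub_lt (lt_of_lt_of_le one_pos hkE) one_pos⟩) else 0) +
          (lIa : ℂ) * ((if h : (i : ℕ) = 0 then 0
              else v (a, Sum.inr (Sum.inr ⟨(i : ℕ) - 1, lt_of_le_of_lt (Nat.sub_le _ _) i.isLt⟩)))
            - v (a, Sum.inr (Sum.inr i))) := by
    intro a i
    have h0 := hv a (Sum.inr (Sum.inr i))
    simp only [Fintype.sum_sum_type] at h0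
    simp only [entryIaE, entryIaIs, entryIaIa] at h0
    simp only [apply_ite Complex.ofReal, Complex.ofReal_zero, Complex.ofReal_mul,
      ite_mul, zero_mul, mul_ite, mul_zero, Finset.sum_ite_irrel, Finset.sum_const_zero] at h0
    rw [Finset.sum_add_distrib, Finset.sum_add_distrib] at h0
    simp only [Finset.sum_ite_irrel, Finset.sum_const_zero, Finset.sum_ite_eq,
      Finset.mem_univ, if_true, add_zero, zero_add] at h0
    simp only [mul_assoc, ← Finset.mul_sum] at h0
    rw [Hsum i (fun j => v (a, Sum.inr (Sum.inr j))),
      Gsum (lt_of_lt_of_le one_pos hkE) i (fun j => v (a, Sum.inl j))] at h0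
    exact h0
  have hkE0 : 0 < kE := lt_of_lt_of_le one_pos hkE
  have hkIs0 : 0 < kIs := lt_of_lt_of_le one_pos hkIs
  have hkIa0 : 0 < kIa := lt_of_lt_of_le one_pos hkIa
  have hdE : z + (lE : ℂ) ≠ 0 := by
    intro h
    have h1 : (z + (lE : ℂ)).re = 0 := by rw [h]; rfl
    simp only [Complex.add_re, Complex.ofReal_re] at h1
    linarith
  have hdIs : z + (lIs : ℂ) ≠ 0 := by
    intro h
    have h1 : (z + (lIs : ℂ)).re = 0 := by rw [h]; rfl
    simp only [Complex.add_re, Complex.ofReal_re] at h1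
    linarith
  have hdIa : z + (lIa : ℂ) ≠ 0 := by
    intro h
    have h1 : (z + (lIa : ℂ)).re = 0 := by rw [h]; rfl
    simp only [Complex.add_re, Complex.ofReal_re] at h1
    linarith
  have hE : ∀ (a : Fin N) (n : ℕ) (h : n < kE),
      v (a, Sum.inl ⟨n, h⟩)
        = ((lE : ℂ) / (z + lE)) ^ n * v (a, Sum.inl ⟨0, hkE0⟩) := by
    intro a n
    induction n with
    | zero => intro h; simp
    | succ m ih =>
      intro h
      have hm : m < kE := Nat.lt_of_succ_lt h
      have h0 := eqE a ⟨m + 1, h⟩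
      simp only [Fin.val_mk, Nat.succ_ne_zero, if_false, dite_false, Nat.add_sub_cancel,
        add_zero] at h0
      have h1 : v (a, Sum.inl ⟨m + 1, h⟩)
          = (lE : ℂ) / (z + lE) * v (a, Sum.inl ⟨m, hm⟩) := by
        rw [div_mul_eq_mul_div, eq_div_iff hdE]
        linear_combination h0
      rw [h1, ih hm, pow_succ]
      ring
  have hIs : ∀ (a : Fin N) (n : ℕ) (h : n < kIs),
      v (a, Sum.inr (Sum.inl ⟨n, h⟩))
        = ((lIs : ℂ) / (z + lIs)) ^ n *
            ((pIs : ℂ) * lE / (z + lIs) *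
              v (a, Sum.inl ⟨kE - 1, Nat.sub_lt hkE0 one_pos⟩)) := by
    intro a n
    induction n with
    | zero =>
      intro h
      have h0 := eqIs a ⟨0, h⟩
      simp only [Fin.val_mk, if_pos, dif_pos, if_true] at h0
      rw [pow_zero, one_mul, div_mul_eq_mul_div, eq_div_iff hdIs]
      linear_combination h0
    | succ m ih =>
      intro h
      have hm : m < kIs := Nat.lt_of_succ_lt h
      have h0 := eqIs a ⟨m + 1, h⟩
      simp only [Fin.val_mk, Nat.succ_ne_zero, if_false, dite_false, Nat.add_sub_cancel,
        mul_zero, zero_add] at h0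
      have h1 : v (a, Sum.inr (Sum.inl ⟨m + 1, h⟩))
          = (lIs : ℂ) / (z + lIs) * v (a, Sum.inr (Sum.inl ⟨m, hm⟩)) := by
        rw [div_mul_eq_mul_div, eq_div_iff hdIs]
        linear_combination h0
      rw [h1, ih hm, pow_succ]
      ring
  have hIa : ∀ (a : Fin N) (n : ℕ) (h : n < kIa),
      v (a, Sum.inr (Sum.inr ⟨n, h⟩))
        = ((lIa : ℂ) / (z + lIa)) ^ n *
            ((pIa : ℂ) * lE / (z + lIa) *
              v (a, Sum.inl ⟨kE - 1, Nat.sub_lt hkE0 one_pos⟩)) := by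
    intro a n
    induction n with
    | zero =>
      intro h
      have h0 := eqIa a ⟨0, h⟩
      simp only [Fin.val_mk, if_pos, dif_pos, if_true] at h0
      rw [pow_zero, one_mul, div_mul_eq_mul_div, eq_div_iff hdIa]
      linear_combination h0
    | succ m ih =>
      intro h
      have hm : m < kIa := Nat.lt_of_succ_lt h
      have h0 := eqIa a ⟨m + 1, h⟩
      simp only [Fin.val_mk, Nat.succ_ne_zero, if_false, dite_false, Nat.add_sub_cancel,
        mul_zero, zero_add] at h0
      have h1 : v (a, Sum.inr (Sum.inr ⟨m + 1, h⟩))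
          = (lIa : ℂ) / (z + lIa) * v (a, Sum.inr (Sum.inr ⟨m, hm⟩)) := by
        rw [div_mul_eq_mul_div, eq_div_iff hdIa]
        linear_combination h0
      rw [h1, ih hm, pow_succ]
      ring
  have hSsum : ∀ b : Fin N, (∑ j : Fin kIs, v (b, Sum.inr (Sum.inl j)))
      = (∑ j ∈ Finset.range kIs, ((lIs : ℂ) / (z + lIs)) ^ j) *
          ((pIs : ℂ) * lE / (z + lIs) *
            (((lE : ℂ) / (z + lE)) ^ (kE - 1) * v (b, Sum.inl ⟨0, hkE0⟩))) := by
    intro b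
    rw [Finset.sum_mul, ← Fin.sum_univ_eq_sum_range
      (fun n => ((lIs : ℂ) / (z + lIs)) ^ n *
        ((pIs : ℂ) * lE / (z + lIs) *
          (((lE : ℂ) / (z + lE)) ^ (kE - 1) * v (b, Sum.inl ⟨0, hkE0⟩)))) kIs]
    apply Finset.sum_congr rfl
    intro j _
    have h1 := hIs b j.1 j.2
    rw [hE b (kE - 1) (Nat.sub_lt hkE0 one_pos)] at h1
    exact h1
  have hSasum : ∀ b : Fin N, (∑ j : Fin kIa, v (b, Sum.inr (Sum.inr j)))
      = (∑ j ∈ Finset.range kIa, ((lIa : ℂ) / (z + lIa)) ^ j) *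
          ((pIa : ℂ) * lE / (z + lIa) *
            (((lE : ℂ) / (z + lE)) ^ (kE - 1) * v (b, Sum.inl ⟨0, hkE0⟩))) := by
    intro b
    rw [Finset.sum_mul, ← Fin.sum_univ_eq_sum_range
      (fun n => ((lIa : ℂ) / (z + lIa)) ^ n *
        ((pIa : ℂ) * lE / (z + lIa) *
          (((lE : ℂ) / (z + lE)) ^ (kE - 1) * v (b, Sum.inl ⟨0, hkE0⟩)))) kIa]
    apply Finset.sum_congr rfl
    intro j _
    have h1 := hIa b j.1 j.2
    rw [hE b (kE - 1) (Nat.sub_lt hkE0 one_pos)] at h1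
    exact h1
  set gs : ℂ := ∑ j ∈ Finset.range kIs, ((lIs : ℂ) / (z + lIs)) ^ j with hgs_def
  set ga : ℂ := ∑ j ∈ Finset.range kIa, ((lIa : ℂ) / (z + lIa)) ^ j with hga_def
  set g : ℂ := ((bIs : ℂ) * ((pIs : ℂ) * lE / (z + lIs)) * gs +
      (bIa : ℂ) * ((pIa : ℂ) * lE / (z + lIa)) * ga) * ((lE : ℂ) / (z + lE)) ^ (kE - 1)
    with hg_def
  have hmain : ∀ a : Fin N, (z + lE) * v (a, Sum.inl ⟨0, hkE0⟩)
      = g * ∑ b, (W a b : ℂ) * v (b, Sum.inl ⟨0, hkE0⟩) := by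
    intro a
    have h0 := eqE a ⟨0, hkE0⟩
    simp only [Fin.val_mk, if_pos, dif_pos, if_true] at h0
    simp only [hSsum, hSasum] at h0
    have hsum1 : ∑ x, (W a x : ℂ) * ((bIs : ℂ) * (gs *
          ((pIs : ℂ) * lE / (z + lIs) *
            (((lE : ℂ) / (z + lE)) ^ (kE - 1) * v (x, Sum.inl ⟨0, hkE0⟩)))))
        = ((bIs : ℂ) * ((pIs : ℂ) * lE / (z + lIs)) * gs * ((lE : ℂ) / (z + lE)) ^ (kE - 1)) *
            ∑ b, (W a b : ℂ) * v (b, Sum.inl ⟨0, hkE0⟩) := by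
      rw [Finset.mul_sum]
      exact Finset.sum_congr rfl fun x _ => by ring
    have hsum2 : ∑ x, (W a x : ℂ) * ((bIa : ℂ) * (ga *
          ((pIa : ℂ) * lE / (z + lIa) *
            (((lE : ℂ) / (z + lE)) ^ (kE - 1) * v (x, Sum.inl ⟨0, hkE0⟩)))))
        = ((bIa : ℂ) * ((pIa : ℂ) * lE / (z + lIa)) * ga * ((lE : ℂ) / (z + lE)) ^ (kE - 1)) *
            ∑ b, (W a b : ℂ) * v (b, Sum.inl ⟨0, hkE0⟩) := by
      rw [Finset.mul_sum]
      exact Finset.sum_congr rfl fun x _ => by ring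
    rw [hsum1, hsum2] at h0
    rw [hg_def]
    linear_combination h0
  have hune : (fun b : Fin N => v (b, Sum.inl ⟨0, hkE0⟩)) ≠ 0 := by
    intro h0
    have hz0 : ∀ b, v (b, Sum.inl ⟨0, hkE0⟩) = 0 := fun b => congrFun h0 b
    have hlast : ∀ b, v (b, Sum.inl ⟨kE - 1, Nat.sub_lt hkE0 one_pos⟩) = 0 := by
      intro b
      rw [hE b (kE - 1) (Nat.sub_lt hkE0 one_pos), hz0 b, mul_zero]
    apply hvne
    funext p
    obtain ⟨b, i⟩ := p
    show v (b, i) = 0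
    rcases i with i | i | i
    · have h1 := hE b i.1 i.2
      rw [hz0 b, mul_zero] at h1
      exact h1
    · have h1 := hIs b i.1 i.2
      rw [hlast b, mul_zero, mul_zero] at h1
      exact h1
    · have h1 := hIa b i.1 i.2
      rw [hlast b, mul_zero, mul_zero] at h1
      exact h1
  by_cases hg : g = 0
  · apply hune
    funext a
    have h1 := hmain a
    rw [hg, zero_mul] at h1
    exact (mul_eq_zero.mp h1).resolve_left hdE
  -- g ≠ 0 : μ = (z+lE)/g is an eigenvalue of W
  have hWu : (W.map (algebraMap ℝ ℂ)) *ᵥ (fun b => v (b, Sum.inl ⟨0, hkE0⟩))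
      = ((z + lE) / g) • (fun b => v (b, Sum.inl ⟨0, hkE0⟩)) := by
    funext a
    show ∑ b, (algebraMap ℝ ℂ) (W a b) * v (b, Sum.inl ⟨0, hkE0⟩)
        = (z + lE) / g * v (a, Sum.inl ⟨0, hkE0⟩)
    rw [div_mul_eq_mul_div, eq_div_iff hg]
    have h1 := hmain a
    simp only [Complex.coe_algebraMap]
    linear_combination -h1
  have habs := abs_le_specRadius W ((z + lE) / g) _ hune hWu
  -- numeric estimates
  have hreles : ∀ l : ℝ, 0 < l → l ≤ ‖z + l‖ := by
    intro l hl
    refine le_trans ?_ (Complex.re_le_norm (z + l))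
    simp only [Complex.add_re, Complex.ofReal_re]
    linarith
  have habs_div : ∀ l : ℝ, 0 < l → ‖(l : ℂ) / (z + l)‖ ≤ 1 := by
    intro l hl
    rw [norm_div, Complex.norm_real, Real.norm_eq_abs, abs_of_pos hl, div_le_one (lt_of_lt_of_le hl (hreles l hl))]
    exact hreles l hl
  have hpow : ‖((lE : ℂ) / (z + lE)) ^ (kE - 1)‖ ≤ 1 := by
    rw [norm_pow]
    exact pow_le_one₀ (norm_nonneg _) (habs_div lE hlE)
  have hgsum : ∀ (l : ℝ) (hl : 0 < l) (k : ℕ),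
      ‖∑ j ∈ Finset.range k, ((l : ℂ) / (z + l)) ^ j‖ ≤ (k : ℝ) := by
    intro l hl k
    refine le_trans (norm_sum_le _ _) ?_
    have : ∀ j ∈ Finset.range k, ‖((l : ℂ) / (z + l)) ^ j‖ ≤ 1 := by
      intro j _
      rw [norm_pow]
      exact pow_le_one₀ (norm_nonneg _) (habs_div l hl)
    refine le_trans (Finset.sum_le_sum this) ?_
    simp
  have habsg : ‖g‖
      ≤ lE * (bIs * pIs * (kIs : ℝ) / lIs + bIa * pIa * (kIa : ℝ) / lIa) := by
    rw [hg_def, norm_mul]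
    have h1 : ‖(bIs : ℂ) * ((pIs : ℂ) * lE / (z + lIs)) * gs‖
        ≤ bIs * (pIs * lE / lIs) * kIs := by
      rw [norm_mul, norm_mul, norm_div, norm_mul, Complex.norm_real, Real.norm_eq_abs, Complex.norm_real, Real.norm_eq_abs,
        Complex.norm_real, Real.norm_eq_abs, abs_of_nonneg hbIs, abs_of_nonneg hpIs.1, abs_of_pos hlE]
      gcongr <;>
        first
          | positivity
          | exact hreles lIs hlIs
          | exact hgsum lIs hlIs kIs
          | exact mul_nonneg hpIs.1 hlE.le
          | exact mul_nonneg hbIs (div_nonneg (mul_nonneg hpIs.1 hlE.le) hlIs.le)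
    have h2 : ‖(bIa : ℂ) * ((pIa : ℂ) * lE / (z + lIa)) * ga‖
        ≤ bIa * (pIa * lE / lIa) * kIa := by
      rw [norm_mul, norm_mul, norm_div, norm_mul, Complex.norm_real, Real.norm_eq_abs, Complex.norm_real, Real.norm_eq_abs,
        Complex.norm_real, Real.norm_eq_abs, abs_of_nonneg hbIa, abs_of_nonneg hpIa.1, abs_of_pos hlE]
      gcongr <;>
        first
          | positivity
          | exact hreles lIa hlIa
          | exact hgsum lIa hlIa kIa
          | exact mul_nonneg hpIa.1 hlE.le
          | exact mul_nonneg hbIa (div_nonneg (mul_nonneg hpIa.1 hlE.le) hlIa.le)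
    calc ‖_ + _‖ * ‖((lE : ℂ) / (z + lE)) ^ (kE - 1)‖
        ≤ (bIs * (pIs * lE / lIs) * kIs + bIa * (pIa * lE / lIa) * kIa) * 1 := by
          refine mul_le_mul (le_trans (norm_add_le _ _) (add_le_add h1 h2)) hpow
            (norm_nonneg _) ?_
          exact add_nonneg (le_trans (norm_nonneg _) h1)
            (le_trans (norm_nonneg _) h2)
      _ = lE * (bIs * pIs * (kIs : ℝ) / lIs + bIa * pIa * (kIa : ℝ) / lIa) := by
          field_simp
  have hρ0 : 0 ≤ specRadius W := le_trans (norm_nonneg _) habs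
  have hμg : ‖(z + lE) / g‖ * ‖g‖ = ‖z + (lE : ℂ)‖ := by
    rw [← norm_mul, div_mul_cancel₀ _ hg]
  have hfin1 : lE ≤ specRadius W *
      (lE * (bIs * pIs * (kIs : ℝ) / lIs + bIa * pIa * (kIa : ℝ) / lIa)) := by
    calc lE ≤ ‖z + (lE : ℂ)‖ := hreles lE hlE
      _ = ‖(z + lE) / g‖ * ‖g‖ := hμg.symm
      _ ≤ specRadius W *
          (lE * (bIs * pIs * (kIs : ℝ) / lIs + bIa * pIa * (kIa : ℝ) / lIa)) :=
        mul_le_mul habs habsg (norm_nonneg _) hρ0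
  nlinarith [hfin1, hthr, hlE, hρ0]
end

section
/- Let W be an N×N entrywise-nonnegative irreducible real matrix, let λ_E, λ_Is, λ_Ia > 0, β_Is, β_Ia ≥ 0, p_Is, p_Ia ∈ [0,1], and integer shape parameters k_E, k_Is, k_Ia ≥ 1. With Δ = W ⊗ δ and Σ = I_N ⊗ σ as defined, Σ is invertible and ρ(−Δ·Σ⁻¹) = (β_Is·p_Is·k_Is/λ_Is + β_Ia·p_Ia·k_Ia/λ_Ia)·ρ(W). -/
open Matrix Polynomial Kronecker

/-! ### Auxiliary definitions and lemmas -/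

lemma eval_charpoly' {n : Type*} [Fintype n] [DecidableEq n] (A : Matrix n n ℂ) (z : ℂ) :
    A.charpoly.eval z = (z • (1 : Matrix n n ℂ) - A).det := by
  rw [Matrix.charpoly, ← Polynomial.coe_evalRingHom, RingHom.map_det]
  congr 1
  ext i j
  by_cases h : i = j
  · subst h; simp [Matrix.charmatrix_apply_eq, Matrix.one_apply]
  · simp [Matrix.charmatrix_apply_ne _ _ _ h, Matrix.one_apply, h]

lemma mem_eigSet_iff {n : Type*} [Fintype n] [DecidableEq n] (M : Matrix n n ℝ) (z : ℂ) :
    z ∈ eigSet M ↔ (z • (1 : Matrix n n ℂ) - M.map (algebraMap ℝ ℂ)).det = 0 := by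
  rw [eigSet, Set.mem_setOf_eq, Polynomial.IsRoot, eval_charpoly']

lemma eigSet_isEmpty {n : Type*} [Fintype n] [DecidableEq n] [IsEmpty n] (M : Matrix n n ℝ) :
    eigSet M = ∅ := by
  ext z
  rw [mem_eigSet_iff]
  simp [Matrix.det_isEmpty]

lemma sum_Hmat_row (k : ℕ) (i : Fin k) :
    ∑ j, Hmat k i j = if (i : ℕ) = 0 then (-1 : ℝ) else 0 := by
  have h1 : ∀ j : Fin k, Hmat k i j
      = (if (j : ℕ) = (i : ℕ) then (-1 : ℝ) else 0)
        + (if (j : ℕ) + 1 = (i : ℕ) then (1 : ℝ) else 0) := by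
    intro j
    simp only [Hmat, Matrix.of_apply]
    split_ifs <;> first | (exfalso; omega) | norm_num
  rw [Finset.sum_congr rfl fun j _ => h1 j, Finset.sum_add_distrib]
  have h2 : (∑ j : Fin k, if (j : ℕ) = (i : ℕ) then (-1 : ℝ) else 0) = -1 := by
    rw [Finset.sum_eq_single i] <;> simp +contextual [Fin.val_eq_val]
  have h3 : (∑ j : Fin k, if (j : ℕ) + 1 = (i : ℕ) then (1 : ℝ) else 0)
      = if (i : ℕ) = 0 then 0 else 1 := by
    by_cases h0 : (i : ℕ) = 0
    · simp [h0]
    · obtain ⟨m, hm⟩ := Nat.exists_eq_succ_of_ne_zero h0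
      have hmk : m < k := by omega
      rw [Finset.sum_eq_single ⟨m, hmk⟩]
      · simp [hm, h0]
      · intro b _ hb
        have : (b : ℕ) ≠ m := by simpa [Fin.ext_iff] using hb
        simp only [hm]
        split_ifs <;> first | (exfalso; omega) | rfl
      · simp
  rw [h2, h3]
  split_ifs <;> ring

lemma sum_Gmat_row (k1 k2 : ℕ) (hk2 : 1 ≤ k2) (i : Fin k1) :
    ∑ j, Gmat k1 k2 i j = if (i : ℕ) = 0 then (1 : ℝ) else 0 := by
  by_cases h0 : (i : ℕ) = 0
  · have hmk : k2 - 1 < k2 := by omega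
    rw [Finset.sum_eq_single ⟨k2 - 1, hmk⟩]
    · simp [Gmat, h0]
    · intro b _ hb
      have : (b : ℕ) ≠ k2 - 1 := by simpa [Fin.ext_iff] using hb
      simp [Gmat, this]
    · simp
  · simp [Gmat, h0]

lemma det_Hmat (k : ℕ) : (Hmat k).det = (-1 : ℝ) ^ k := by
  have h : (Hmat k).BlockTriangular OrderDual.toDual := by
    intro i j hij
    have : (i : ℕ) < (j : ℕ) := hij
    simp only [Hmat, Matrix.of_apply]
    split_ifs <;> first | (exfalso; omega) | rfl
  rw [Matrix.det_of_lowerTriangular _ h]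
  simp [Hmat, Finset.prod_const, Finset.card_univ]

lemma det_sigmaMat (lE lIs lIa pIs pIa : ℝ) (kE kIs kIa : ℕ) :
    (sigmaMat lE lIs lIa pIs pIa kE kIs kIa).det
      = (-lE) ^ kE * ((-lIs) ^ kIs * (-lIa) ^ kIa) := by
  rw [sigmaMat, Matrix.det_fromBlocks_zero₁₂, Matrix.det_fromBlocks_zero₁₂]
  rw [Matrix.det_smul, Matrix.det_smul, Matrix.det_smul, det_Hmat, det_Hmat, det_Hmat]
  simp only [Fintype.card_fin]
  ring

/-- The column vector `E`: `1` in the first coordinate, `0` elsewhere. -/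
def EmatAux (kE kIs kIa : ℕ) : Matrix (Fin kE ⊕ (Fin kIs ⊕ Fin kIa)) Unit ℝ :=
  Matrix.of fun i _ =>
    Sum.elim (fun i1 : Fin kE => if (i1 : ℕ) = 0 then (1 : ℝ) else 0) (fun _ => 0) i

/-- The row vector `U`: the first row of `δ`. -/
def UmatAux (bIs bIa : ℝ) (kE kIs kIa : ℕ) :
    Matrix Unit (Fin kE ⊕ (Fin kIs ⊕ Fin kIa)) ℝ :=
  Matrix.of fun _ j =>
    Sum.elim (fun _ : Fin kE => (0 : ℝ))
      (Sum.elim (fun _ : Fin kIs => bIs) (fun _ : Fin kIa => bIa)) j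

/-- The explicit solution `X` of `σ · X = E`. -/
noncomputable def XmatAux (lE lIs lIa pIs pIa : ℝ) (kE kIs kIa : ℕ) :
    Matrix (Fin kE ⊕ (Fin kIs ⊕ Fin kIa)) Unit ℝ :=
  Matrix.of fun i _ =>
    Sum.elim (fun _ : Fin kE => -(1 / lE))
      (Sum.elim (fun _ : Fin kIs => -(pIs / lIs)) (fun _ : Fin kIa => -(pIa / lIa))) i

lemma delta_eq_mul (bIs bIa : ℝ) (kE kIs kIa : ℕ) :
    deltaMat bIs bIa kE kIs kIa = EmatAux kE kIs kIa * UmatAux bIs bIa kE kIs kIa := by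
  ext i j
  rw [Matrix.mul_apply]
  rw [Fintype.sum_unique]
  rcases i with i1 | i2
  · rcases j with j1 | j2 <;>
      simp [deltaMat, EmatAux, UmatAux, ite_mul]
  · simp [deltaMat, EmatAux, UmatAux]

lemma sigma_mul_X (lE lIs lIa pIs pIa : ℝ) (hlE : lE ≠ 0) (hlIs : lIs ≠ 0) (hlIa : lIa ≠ 0)
    (kE kIs kIa : ℕ) (hkE : 1 ≤ kE) :
    sigmaMat lE lIs lIa pIs pIa kE kIs kIa * XmatAux lE lIs lIa pIs pIa kE kIs kIa
      = EmatAux kE kIs kIa := by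
  ext i j
  rw [Matrix.mul_apply, Fintype.sum_sum_type, Fintype.sum_sum_type]
  rcases i with i1 | i2 | i3
  · simp only [sigmaMat, XmatAux, EmatAux, Matrix.fromBlocks_apply₁₁, Matrix.fromBlocks_apply₁₂,
      Matrix.of_apply, Sum.elim_inl, Sum.elim_inr, Matrix.smul_apply, smul_eq_mul,
      Matrix.zero_apply, zero_mul, Finset.sum_const_zero, add_zero]
    have h1 : ∀ j1 : Fin kE, lE * Hmat kE i1 j1 * -(1 / lE)
        = (lE * -(1 / lE)) * Hmat kE i1 j1 := fun _ => by ring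
    rw [Finset.sum_congr rfl fun j1 _ => h1 j1, ← Finset.mul_sum, sum_Hmat_row]
    split_ifs
    · field_simp
    · ring
  · simp only [sigmaMat, XmatAux, EmatAux, Matrix.fromBlocks_apply₂₁, Matrix.fromBlocks_apply₂₂,
      Matrix.fromRows_apply_inl, Matrix.fromBlocks_apply₁₁, Matrix.fromBlocks_apply₁₂,
      Matrix.of_apply, Sum.elim_inl, Sum.elim_inr, Matrix.smul_apply, smul_eq_mul,
      Matrix.zero_apply, zero_mul, Finset.sum_const_zero, add_zero]
    have h1 : ∀ j1 : Fin kE, pIs * lE * Gmat kIs kE i2 j1 * -(1 / lE)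
        = (pIs * lE * -(1 / lE)) * Gmat kIs kE i2 j1 := fun _ => by ring
    have h2 : ∀ j2 : Fin kIs, lIs * Hmat kIs i2 j2 * -(pIs / lIs)
        = (lIs * -(pIs / lIs)) * Hmat kIs i2 j2 := fun _ => by ring
    rw [Finset.sum_congr rfl fun j1 _ => h1 j1, ← Finset.mul_sum, sum_Gmat_row _ _ hkE,
      Finset.sum_congr rfl fun j2 _ => h2 j2, ← Finset.mul_sum, sum_Hmat_row]
    split_ifs
    · field_simp
      ring
    · ring
  · simp only [sigmaMat, XmatAux, EmatAux, Matrix.fromBlocks_apply₂₁, Matrix.fromBlocks_apply₂₂,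
      Matrix.fromRows_apply_inr, Matrix.fromBlocks_apply₂₁, Matrix.fromBlocks_apply₂₂,
      Matrix.of_apply, Sum.elim_inl, Sum.elim_inr, Matrix.smul_apply, smul_eq_mul,
      Matrix.zero_apply, zero_mul, Finset.sum_const_zero, add_zero, zero_add]
    have h1 : ∀ j1 : Fin kE, pIa * lE * Gmat kIa kE i3 j1 * -(1 / lE)
        = (pIa * lE * -(1 / lE)) * Gmat kIa kE i3 j1 := fun _ => by ring
    have h2 : ∀ j3 : Fin kIa, lIa * Hmat kIa i3 j3 * -(pIa / lIa)
        = (lIa * -(pIa / lIa)) * Hmat kIa i3 j3 := fun _ => by ring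
    rw [Finset.sum_congr rfl fun j1 _ => h1 j1, ← Finset.mul_sum, sum_Gmat_row _ _ hkE,
      Finset.sum_congr rfl fun j3 _ => h2 j3, ← Finset.mul_sum, sum_Hmat_row]
    split_ifs
    · field_simp
      ring
    · ring

lemma U_mul_X (lE lIs lIa pIs pIa bIs bIa : ℝ) (kE kIs kIa : ℕ) :
    UmatAux bIs bIa kE kIs kIa * XmatAux lE lIs lIa pIs pIa kE kIs kIa
      = (-(bIs * pIs * (kIs : ℝ) / lIs + bIa * pIa * (kIa : ℝ) / lIa))
          • (1 : Matrix Unit Unit ℝ) := by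
  ext i j
  cases i; cases j
  rw [Matrix.mul_apply, Fintype.sum_sum_type, Fintype.sum_sum_type]
  simp only [UmatAux, XmatAux, Matrix.of_apply, Sum.elim_inl, Sum.elim_inr, zero_mul,
    Finset.sum_const_zero, Finset.sum_const, Finset.card_univ, Fintype.card_fin, nsmul_eq_mul,
    zero_add, Matrix.smul_apply, Matrix.one_apply_eq, smul_eq_mul, mul_one]
  ring

lemma map_kron {l m n p : Type*} (A : Matrix l m ℝ) (B : Matrix n p ℝ) :
    (A ⊗ₖ B).map (algebraMap ℝ ℂ) = (A.map (algebraMap ℝ ℂ)) ⊗ₖ (B.map (algebraMap ℝ ℂ)) := by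
  ext ⟨i, j⟩ ⟨a, b⟩
  simp [Matrix.kroneckerMap_apply]

lemma det_key {n₁ n₂ : Type*} [Fintype n₁] [DecidableEq n₁] [Fintype n₂] [DecidableEq n₂]
    (P : Matrix n₁ n₂ ℂ) (Q : Matrix n₂ n₁ ℂ) {z : ℂ} (hz : z ≠ 0) :
    ((z • (1 : Matrix n₁ n₁ ℂ) + P * Q).det = 0
      ↔ (z • (1 : Matrix n₂ n₂ ℂ) + Q * P).det = 0) := by
  have e1 : z • (1 : Matrix n₁ n₁ ℂ) + P * Q
      = z • ((1 : Matrix n₁ n₁ ℂ) + (z⁻¹ • P) * Q) := by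
    rw [smul_add, Matrix.smul_mul, smul_smul, mul_inv_cancel₀ hz, one_smul]
  have e2 : z • (1 : Matrix n₂ n₂ ℂ) + Q * P
      = z • ((1 : Matrix n₂ n₂ ℂ) + Q * (z⁻¹ • P)) := by
    rw [smul_add, Matrix.mul_smul, smul_smul, mul_inv_cancel₀ hz, one_smul]
  rw [e1, e2, Matrix.det_smul, Matrix.det_smul, Matrix.det_one_add_mul_comm]
  rw [mul_eq_zero, mul_eq_zero]
  simp [pow_eq_zero_iff', hz]

/-- `Σ = I_N ⊗ σ` is invertible and
`ρ(-Δ·Σ⁻¹) = (β_Is·p_Is·k_Is/λ_Is + β_Ia·p_Ia·k_Ia/λ_Ia)·ρ(W)`. -/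
theorem stmt2 {N : ℕ} (W : Matrix (Fin N) (Fin N) ℝ)
    (hWnonneg : ∀ i j, 0 ≤ W i j)
    (hWirr : ∀ i j, ∃ n : ℕ, 1 ≤ n ∧ 0 < (W ^ n) i j)
    (lE lIs lIa : ℝ) (hlE : 0 < lE) (hlIs : 0 < lIs) (hlIa : 0 < lIa)
    (bIs bIa : ℝ) (hbIs : 0 ≤ bIs) (hbIa : 0 ≤ bIa)
    (pIs pIa : ℝ) (hpIs : pIs ∈ Set.Icc (0 : ℝ) 1) (hpIa : pIa ∈ Set.Icc (0 : ℝ) 1)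
    (kE kIs kIa : ℕ) (hkE : 1 ≤ kE) (hkIs : 1 ≤ kIs) (hkIa : 1 ≤ kIa) :
    IsUnit ((1 : Matrix (Fin N) (Fin N) ℝ) ⊗ₖ sigmaMat lE lIs lIa pIs pIa kE kIs kIa).det ∧
    specRadius (-(W ⊗ₖ deltaMat bIs bIa kE kIs kIa *
        ((1 : Matrix (Fin N) (Fin N) ℝ) ⊗ₖ sigmaMat lE lIs lIa pIs pIa kE kIs kIa)⁻¹)) =
      (bIs * pIs * (kIs : ℝ) / lIs + bIa * pIa * (kIa : ℝ) / lIa) * specRadius W := by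
  obtain ⟨hpIs0, hpIs1⟩ := hpIs
  obtain ⟨hpIa0, hpIa1⟩ := hpIa
  have hσdet : (sigmaMat lE lIs lIa pIs pIa kE kIs kIa).det ≠ 0 := by
    rw [det_sigmaMat]
    exact mul_ne_zero (pow_ne_zero _ (neg_ne_zero.mpr hlE.ne'))
      (mul_ne_zero (pow_ne_zero _ (neg_ne_zero.mpr hlIs.ne'))
        (pow_ne_zero _ (neg_ne_zero.mpr hlIa.ne')))
  have hσunit : IsUnit (sigmaMat lE lIs lIa pIs pIa kE kIs kIa).det :=
    isUnit_iff_ne_zero.mpr hσdet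
  have hbig : IsUnit
      ((1 : Matrix (Fin N) (Fin N) ℝ) ⊗ₖ sigmaMat lE lIs lIa pIs pIa kE kIs kIa).det := by
    rw [Matrix.det_kronecker, Matrix.det_one, one_pow, one_mul]
    exact hσunit.pow _
  refine ⟨hbig, ?_⟩
  rcases Nat.eq_zero_or_pos N with hN0 | hN
  · subst hN0
    unfold specRadius
    rw [eigSet_isEmpty, eigSet_isEmpty]
    simp [Real.sSup_empty]
  set c := bIs * pIs * (kIs : ℝ) / lIs + bIa * pIa * (kIa : ℝ) / lIa with hc
  have hcnn : 0 ≤ c := by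
    rw [hc]
    have := Nat.cast_nonneg (α := ℝ) kIs
    have := Nat.cast_nonneg (α := ℝ) kIa
    positivity
  have hXeq : (sigmaMat lE lIs lIa pIs pIa kE kIs kIa)⁻¹ * EmatAux kE kIs kIa
      = XmatAux lE lIs lIa pIs pIa kE kIs kIa := by
    rw [← sigma_mul_X lE lIs lIa pIs pIa hlE.ne' hlIs.ne' hlIa.ne' kE kIs kIa hkE,
      ← Matrix.mul_assoc, Matrix.nonsing_inv_mul _ hσunit, Matrix.one_mul]
  have hVE : UmatAux bIs bIa kE kIs kIa * (sigmaMat lE lIs lIa pIs pIa kE kIs kIa)⁻¹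
        * EmatAux kE kIs kIa = (-c) • (1 : Matrix Unit Unit ℝ) := by
    rw [Matrix.mul_assoc, hXeq, U_mul_X, hc]
  have hMfact : -(W ⊗ₖ deltaMat bIs bIa kE kIs kIa *
        ((1 : Matrix (Fin N) (Fin N) ℝ) ⊗ₖ sigmaMat lE lIs lIa pIs pIa kE kIs kIa)⁻¹)
      = -(W ⊗ₖ (EmatAux kE kIs kIa * (UmatAux bIs bIa kE kIs kIa *
          (sigmaMat lE lIs lIa pIs pIa kE kIs kIa)⁻¹))) := by
    have hone : (1 : Matrix (Fin N) (Fin N) ℝ)⁻¹ = 1 :=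
      Matrix.inv_eq_right_inv (by rw [mul_one])
    rw [Matrix.inv_kronecker, hone, ← Matrix.mul_kronecker_mul, Matrix.mul_one,
      delta_eq_mul, Matrix.mul_assoc]
  -- complex versions
  have hmapneg : ∀ (A : Matrix (Fin N × (Fin kE ⊕ (Fin kIs ⊕ Fin kIa)))
      (Fin N × (Fin kE ⊕ (Fin kIs ⊕ Fin kIa))) ℝ),
      (-A).map (algebraMap ℝ ℂ) = -(A.map (algebraMap ℝ ℂ)) := by
    intro A; ext i j; simp
  have hmap : (-(W ⊗ₖ (EmatAux kE kIs kIa * (UmatAux bIs bIa kE kIs kIa *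
          (sigmaMat lE lIs lIa pIs pIa kE kIs kIa)⁻¹)))).map (algebraMap ℝ ℂ)
      = -((W.map (algebraMap ℝ ℂ) ⊗ₖ (EmatAux kE kIs kIa).map (algebraMap ℝ ℂ)) *
          ((1 : Matrix (Fin N) (Fin N) ℂ) ⊗ₖ ((UmatAux bIs bIa kE kIs kIa *
            (sigmaMat lE lIs lIa pIs pIa kE kIs kIa)⁻¹).map (algebraMap ℝ ℂ)))) := by
    rw [hmapneg, map_kron, Matrix.map_mul, ← Matrix.mul_kronecker_mul, Matrix.mul_one]
  have hQP : ((1 : Matrix (Fin N) (Fin N) ℂ) ⊗ₖ ((UmatAux bIs bIa kE kIs kIa *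
          (sigmaMat lE lIs lIa pIs pIa kE kIs kIa)⁻¹).map (algebraMap ℝ ℂ))) *
        (W.map (algebraMap ℝ ℂ) ⊗ₖ (EmatAux kE kIs kIa).map (algebraMap ℝ ℂ))
      = -((c : ℂ) • (W.map (algebraMap ℝ ℂ) ⊗ₖ (1 : Matrix Unit Unit ℂ))) := by
    rw [← Matrix.mul_kronecker_mul, Matrix.one_mul, ← Matrix.map_mul, hVE]
    have h1 : (((-c) • (1 : Matrix Unit Unit ℝ)).map (algebraMap ℝ ℂ))
        = ((-c : ℝ) : ℂ) • (1 : Matrix Unit Unit ℂ) := by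
      ext i j; cases i; cases j; simp [Matrix.one_apply]
    rw [h1, Matrix.kronecker_smul, Complex.ofReal_neg, neg_smul]
  have hdetred : ∀ z : ℂ,
      (z • (1 : Matrix (Fin N × Unit) (Fin N × Unit) ℂ) -
        (c : ℂ) • (W.map (algebraMap ℝ ℂ) ⊗ₖ (1 : Matrix Unit Unit ℂ))).det
      = (z • (1 : Matrix (Fin N) (Fin N) ℂ) - (c : ℂ) • W.map (algebraMap ℝ ℂ)).det := by
    intro z
    rw [← Matrix.det_submatrix_equiv_self
      ((Equiv.prodUnique (Fin N) Unit).symm)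
      (z • (1 : Matrix (Fin N × Unit) (Fin N × Unit) ℂ) -
        (c : ℂ) • (W.map (algebraMap ℝ ℂ) ⊗ₖ (1 : Matrix Unit Unit ℂ)))]
    congr 1
    ext i j
    simp [Matrix.submatrix_apply, Matrix.one_apply, Prod.ext_iff, Matrix.kroneckerMap_apply,
      Equiv.prodUnique]
  have heig : eigSet (-(W ⊗ₖ deltaMat bIs bIa kE kIs kIa *
        ((1 : Matrix (Fin N) (Fin N) ℝ) ⊗ₖ sigmaMat lE lIs lIa pIs pIa kE kIs kIa)⁻¹))
      = insert (0 : ℂ) {z : ℂ |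
          (z • (1 : Matrix (Fin N) (Fin N) ℂ) - (c : ℂ) • W.map (algebraMap ℝ ℂ)).det = 0} := by
    ext z
    rw [mem_eigSet_iff, Set.mem_insert_iff, Set.mem_setOf_eq, hMfact, hmap, sub_neg_eq_add]
    by_cases hz : z = 0
    · subst hz
      simp only [zero_smul, zero_add, true_or, iff_true]
      apply Matrix.det_eq_zero_of_row_eq_zero (⟨0, hN⟩, Sum.inr (Sum.inl ⟨0, hkIs⟩))
      intro j
      rw [Matrix.mul_apply]
      apply Finset.sum_eq_zero
      rintro ⟨k, u⟩ _
      simp [Matrix.kroneckerMap_apply, EmatAux, Matrix.map_apply]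
    · rw [det_key _ _ hz, hQP, ← sub_eq_add_neg, hdetred z]
      simp [hz]
  -- finiteness and nonemptiness of the eigenvalue set of W
  have hchar0 : (W.map (algebraMap ℝ ℂ)).charpoly ≠ 0 := (Matrix.charpoly_monic _).ne_zero
  have hWfin : (eigSet W).Finite := Polynomial.finite_setOf_isRoot hchar0
  have hWne : (eigSet W).Nonempty := by
    have hdeg : 0 < (W.map (algebraMap ℝ ℂ)).charpoly.degree := by
      rw [← Polynomial.natDegree_pos_iff_degree_pos, Matrix.charpoly_natDegree_eq_dim,
        Fintype.card_fin]
      exact hN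
    obtain ⟨z, hz⟩ := Complex.exists_root hdeg
    exact ⟨z, hz⟩
  have habs : (fun z : ℂ => ‖z‖) '' {z : ℂ |
      (z • (1 : Matrix (Fin N) (Fin N) ℂ) - (c : ℂ) • W.map (algebraMap ℝ ℂ)).det = 0}
      = (fun t => c * t) '' ((fun z : ℂ => ‖z‖) '' eigSet W) := by
    by_cases hc0 : c = 0
    · have h1 : {z : ℂ | (z • (1 : Matrix (Fin N) (Fin N) ℂ)
            - (c : ℂ) • W.map (algebraMap ℝ ℂ)).det = 0} = {0} := by
        ext z
        simp [hc0, Matrix.det_smul, pow_eq_zero_iff hN.ne']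
      have h2 : (fun t : ℝ => (0 : ℝ) * t) = fun _ => (0 : ℝ) := by funext t; ring
      rw [h1, hc0, h2, Set.image_singleton, norm_zero,
        Set.Nonempty.image_const (hWne.image _)]
    · have hcne : (c : ℂ) ≠ 0 := by exact_mod_cast hc0
      have h1 : {z : ℂ | (z • (1 : Matrix (Fin N) (Fin N) ℂ)
            - (c : ℂ) • W.map (algebraMap ℝ ℂ)).det = 0}
          = (fun w : ℂ => (c : ℂ) * w) '' eigSet W := by
        ext z
        rw [Set.mem_setOf_eq]
        have hfact : z • (1 : Matrix (Fin N) (Fin N) ℂ) - (c : ℂ) • W.map (algebraMap ℝ ℂ)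
            = (c : ℂ) • ((z / (c : ℂ)) • (1 : Matrix (Fin N) (Fin N) ℂ)
                - W.map (algebraMap ℝ ℂ)) := by
          rw [smul_sub, smul_smul, mul_comm ((c : ℂ)) (z / (c : ℂ)), div_mul_cancel₀ _ hcne]
        rw [hfact, Matrix.det_smul, mul_eq_zero]
        have hpow : ((c : ℂ) ^ Fintype.card (Fin N)) ≠ 0 := pow_ne_zero _ hcne
        simp only [hpow, false_or]
        constructor
        · intro h
          exact ⟨z / (c : ℂ), (mem_eigSet_iff W _).mpr h,
            by show (c : ℂ) * (z / (c : ℂ)) = z; rw [mul_comm, div_mul_cancel₀ _ hcne]⟩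
        · rintro ⟨w, hw, rfl⟩
          have h2 : ((c : ℂ) * w) / (c : ℂ) = w := by
            rw [mul_comm, mul_div_assoc, div_self hcne, mul_one]
          rw [h2]
          exact (mem_eigSet_iff W w).mp hw
      rw [h1, Set.image_image, Set.image_image]
      apply Set.image_congr
      intro w _
      rw [norm_mul, Complex.norm_real, Real.norm_of_nonneg hcnn]
  unfold specRadius
  rw [heig, Set.image_insert_eq, norm_zero, habs]
  set T := (fun z : ℂ => ‖z‖) '' eigSet W with hT
  have hTne : T.Nonempty := hWne.image _
  have hTfin : T.Finite := hWfin.image _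
  have hsup_mem : sSup T ∈ T := hTne.csSup_mem hTfin
  have hTnonneg : ∀ x ∈ T, 0 ≤ x := by
    rintro x ⟨z, _, rfl⟩
    exact norm_nonneg z
  have hgreat : IsGreatest ((fun t => c * t) '' T) (c * sSup T) := by
    constructor
    · exact ⟨sSup T, hsup_mem, rfl⟩
    · rintro y ⟨t, ht, rfl⟩
      exact mul_le_mul_of_nonneg_left (le_csSup hTfin.bddAbove ht) hcnn
  rw [csSup_insert (hTfin.image _).bddAbove ⟨_, hgreat.1⟩, hgreat.csSup_eq,
    sup_eq_right.mpr (mul_nonneg hcnn (hTnonneg _ hsup_mem))]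
end

section
/- Let λ_E, λ_Is, λ_Ia > 0, p_Is, p_Ia ∈ [0,1], and integer shape parameters k_E, k_Is, k_Ia ≥ 1, and let σ be the associated block matrix. Then σ is invertible and −σ⁻¹ equals the block matrix [[λ_E⁻¹·F_{k_E}, 0, 0], [p_Is·λ_Is⁻¹·J_{k_Is,k_E}, λ_Is⁻¹·F_{k_Is}, 0], [p_Ia·λ_Ia⁻¹·J_{k_Ia,k_E}, 0, λ_Ia⁻¹·F_{k_Ia}]]; in particular every entry of −σ⁻¹ is nonnegative. -/
open Matrix Polynomial Kronecker

lemma HF (k : ℕ) : Hmat k * Fmat k = -1 := by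
  ext i j
  rw [Matrix.mul_apply]
  by_cases hi : (i : ℕ) = 0
  · have : ∀ l : Fin k, Hmat k i l * Fmat k l j =
        if l = i then (if (j:ℕ) ≤ (i:ℕ) then (-1:ℝ) else 0) else 0 := by
      intro l
      simp only [Hmat, Fmat, Matrix.of_apply]
      rcases eq_or_ne l i with rfl | hl
      · simp [mul_ite]
      · have h1 : (i:ℕ) ≠ (l:ℕ) := fun h => hl (Fin.ext h.symm)
        have h2 : (i:ℕ) ≠ (l:ℕ)+1 := by omega
        simp [h1, h2, hl]
    simp only [this, Finset.sum_ite_eq', Finset.mem_univ, if_true]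
    have hji : ((j:ℕ) ≤ (i:ℕ)) ↔ i = j := by
      rw [Fin.ext_iff]; omega
    by_cases h : i = j <;> simp [h, Matrix.one_apply, hji.symm.not.mpr, hji] <;> omega
  · have hik : (i:ℕ) - 1 < k := by omega
    set p : Fin k := ⟨(i:ℕ) - 1, hik⟩ with hp
    have : ∀ l : Fin k, Hmat k i l * Fmat k l j =
        (if l = i then (if (j:ℕ) ≤ (i:ℕ) then (-1:ℝ) else 0) else 0)
        + (if l = p then (if (j:ℕ) ≤ (i:ℕ) - 1 then (1:ℝ) else 0) else 0) := by
      intro l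
      simp only [Hmat, Fmat, Matrix.of_apply]
      have hpv : (p:ℕ) = (i:ℕ) - 1 := rfl
      rcases eq_or_ne l i with rfl | hl
      · have hlp : l ≠ p := by
          intro h; rw [Fin.ext_iff, hpv] at h; omega
        simp [hlp, mul_ite]
      · have h1 : (i:ℕ) ≠ (l:ℕ) := fun h => hl (Fin.ext h.symm)
        by_cases hlp : l = p
        · have hlv : (l:ℕ) = (i:ℕ) - 1 := by rw [hlp, hpv]
          have h2 : (i:ℕ) = (l:ℕ)+1 := by omega
          rw [if_neg h1, if_pos h2, if_neg hl, if_pos hlp, hlv]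
          simp
        · have h2 : (i:ℕ) ≠ (l:ℕ)+1 := by
            intro h; apply hlp; rw [Fin.ext_iff, hpv]; omega
          simp [h1, h2, hl, hlp]
    simp only [this, Finset.sum_add_distrib, Finset.sum_ite_eq', Finset.mem_univ, if_true]
    have hij : ¬ ((i:ℕ) = (j:ℕ) ∧ true) ∨ True := by tauto
    rw [Matrix.neg_apply, Matrix.one_apply]
    by_cases h : i = j
    · subst h; simp; omega
    · have : (i:ℕ) ≠ (j:ℕ) := fun hh => h (Fin.ext hh)
      simp [h]
      split <;> split <;> simp_all <;> omega

lemma GF_apply (k1 k2 : ℕ) (i : Fin k1) (j : Fin k2) :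
    (Gmat k1 k2 * Fmat k2) i j = if (i:ℕ) = 0 then 1 else 0 := by
  have hk2 : 0 < k2 := j.pos
  have hq : k2 - 1 < k2 := by omega
  set q : Fin k2 := ⟨k2 - 1, hq⟩ with hqdef
  rw [Matrix.mul_apply]
  have : ∀ l : Fin k2, Gmat k1 k2 i l * Fmat k2 l j =
      if l = q then (if (i:ℕ) = 0 then (1:ℝ) else 0) else 0 := by
    intro l
    simp only [Gmat, Fmat, Matrix.of_apply]
    by_cases hl : l = q
    · have hlv : (l:ℕ) = k2 - 1 := by rw [hl]
      have hjl : (j:ℕ) ≤ (l:ℕ) := by omega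
      rw [if_pos hl, hlv]
      have : ¬ (k2 - 1 < (j:ℕ)) := by omega
      simp [ite_and, this]
    · have hlv : (l:ℕ) ≠ k2 - 1 := by
        intro h; apply hl; exact Fin.ext h
      simp [hl, hlv]
  simp only [this, Finset.sum_ite_eq', Finset.mem_univ, if_true]

lemma HJ_apply (k1 k2 : ℕ) (i : Fin k1) (j : Fin k2) :
    (Hmat k1 * Jmat k1 k2) i j = if (i:ℕ) = 0 then -1 else 0 := by
  rw [Matrix.mul_apply]
  have hJ : ∀ l : Fin k1, Hmat k1 i l * Jmat k1 k2 l j = Hmat k1 i l := by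
    intro l; simp [Jmat]
  simp only [hJ]
  by_cases hi : (i:ℕ) = 0
  · have : ∀ l : Fin k1, Hmat k1 i l = if l = i then (-1:ℝ) else 0 := by
      intro l
      simp only [Hmat, Matrix.of_apply]
      by_cases hl : l = i
      · simp [hl]
      · have h1 : (i:ℕ) ≠ (l:ℕ) := fun h => hl (Fin.ext h.symm)
        have h2 : (i:ℕ) ≠ (l:ℕ)+1 := by omega
        simp [h1, h2, hl]
    simp [this, hi]
  · have hik : (i:ℕ) - 1 < k1 := by omega
    set p : Fin k1 := ⟨(i:ℕ) - 1, hik⟩ with hpdef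
    have hpv : (p:ℕ) = (i:ℕ) - 1 := rfl
    have : ∀ l : Fin k1, Hmat k1 i l =
        (if l = i then (-1:ℝ) else 0) + (if l = p then (1:ℝ) else 0) := by
      intro l
      simp only [Hmat, Matrix.of_apply]
      by_cases hl : l = i
      · have hlp : i ≠ p := by intro h; rw [Fin.ext_iff, hpv] at h; omega
        rw [hl]
        simp [hlp]
      · have h1 : (i:ℕ) ≠ (l:ℕ) := fun h => hl (Fin.ext h.symm)
        by_cases hlp : l = p
        · have hlv : (l:ℕ) = (i:ℕ) - 1 := by rw [hlp, hpv]
          have h2 : (i:ℕ) = (l:ℕ)+1 := by omega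
          rw [if_neg h1, if_pos h2, if_neg hl, if_pos hlp]
          simp
        · have h2 : (i:ℕ) ≠ (l:ℕ)+1 := by
            intro h; apply hlp; rw [Fin.ext_iff, hpv]; omega
          simp [h1, h2, hl, hlp]
    simp [this, Finset.sum_add_distrib, hi]

lemma GF_add_HJ (k1 k2 : ℕ) : Gmat k1 k2 * Fmat k2 + Hmat k1 * Jmat k1 k2 = 0 := by
  ext i j
  rw [Matrix.add_apply, GF_apply, HJ_apply]
  split <;> simp

lemma fromBlocks_mul_fromRows {m₁ m₂ n₁ n₂ p : ℕ}
    (A : Matrix (Fin m₁) (Fin n₁) ℝ) (D : Matrix (Fin m₂) (Fin n₂) ℝ)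
    (X : Matrix (Fin n₁) (Fin p) ℝ) (Y : Matrix (Fin n₂) (Fin p) ℝ) :
    Matrix.fromBlocks A 0 0 D * Matrix.fromRows X Y =
      Matrix.fromRows (A * X) (D * Y) := by
  ext (i | i) j <;>
    simp [Matrix.mul_apply, Matrix.fromBlocks, Fintype.sum_sum_type,
      Matrix.fromRows_apply_inl, Matrix.fromRows_apply_inr]

lemma fromRows_add {m₁ m₂ n : ℕ} (X Z : Matrix (Fin m₁) (Fin n) ℝ)
    (Y W : Matrix (Fin m₂) (Fin n) ℝ) :
    Matrix.fromRows X Y + Matrix.fromRows Z W = Matrix.fromRows (X + Z) (Y + W) := by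
  ext (i | i) j <;> simp

lemma smul_HF (a : ℝ) (ha : a ≠ 0) (k : ℕ) :
    (a • Hmat k) * (a⁻¹ • Fmat k) = -1 := by
  rw [smul_mul_assoc, mul_smul_comm, smul_smul, mul_inv_cancel₀ ha, one_smul, HF]

lemma gblock (p a b : ℝ) (ha : a ≠ 0) (hb : b ≠ 0) (k1 k2 : ℕ) :
    ((p * a) • Gmat k1 k2) * (a⁻¹ • Fmat k2) + (b • Hmat k1) * ((p * b⁻¹) • Jmat k1 k2) = 0 := by
  have e1 : ((p * a) • Gmat k1 k2) * (a⁻¹ • Fmat k2) = p • (Gmat k1 k2 * Fmat k2) := by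
    rw [Matrix.smul_mul, Matrix.mul_smul, smul_smul]
    congr 1; field_simp
  have e2 : (b • Hmat k1) * ((p * b⁻¹) • Jmat k1 k2) = p • (Hmat k1 * Jmat k1 k2) := by
    rw [Matrix.smul_mul, Matrix.mul_smul, smul_smul]
    congr 1; field_simp
  rw [e1, e2, ← smul_add, GF_add_HJ, smul_zero]

/-- σ is invertible and `-σ⁻¹` equals the block matrix
`[[λ_E⁻¹·F_{k_E}, 0, 0], [p_Is·λ_Is⁻¹·J_{k_Is,k_E}, λ_Is⁻¹·F_{k_Is}, 0],
  [p_Ia·λ_Ia⁻¹·J_{k_Ia,k_E}, 0, λ_Ia⁻¹·F_{k_Ia}]]`; in particular every entry of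
`-σ⁻¹` is nonnegative. -/
theorem stmt4 (lE lIs lIa : ℝ) (hlE : 0 < lE) (hlIs : 0 < lIs) (hlIa : 0 < lIa)
    (pIs pIa : ℝ) (hpIs : pIs ∈ Set.Icc (0 : ℝ) 1) (hpIa : pIa ∈ Set.Icc (0 : ℝ) 1)
    (kE kIs kIa : ℕ) (hkE : 1 ≤ kE) (hkIs : 1 ≤ kIs) (hkIa : 1 ≤ kIa) :
    IsUnit (sigmaMat lE lIs lIa pIs pIa kE kIs kIa).det ∧
    -(sigmaMat lE lIs lIa pIs pIa kE kIs kIa)⁻¹ =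
      Matrix.fromBlocks (lE⁻¹ • Fmat kE) 0
        (Matrix.fromRows ((pIs * lIs⁻¹) • Jmat kIs kE) ((pIa * lIa⁻¹) • Jmat kIa kE))
        (Matrix.fromBlocks (lIs⁻¹ • Fmat kIs) 0 0 (lIa⁻¹ • Fmat kIa)) ∧
    ∀ i j, 0 ≤ (-(sigmaMat lE lIs lIa pIs pIa kE kIs kIa)⁻¹) i j := by
  have hE := hlE.ne'
  have hIs := hlIs.ne'
  have hIa := hlIa.ne'
  set B := Matrix.fromBlocks (lE⁻¹ • Fmat kE) 0
      (Matrix.fromRows ((pIs * lIs⁻¹) • Jmat kIs kE) ((pIa * lIa⁻¹) • Jmat kIa kE))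
      (Matrix.fromBlocks (lIs⁻¹ • Fmat kIs) 0 0 (lIa⁻¹ • Fmat kIa)) with hB
  have key : sigmaMat lE lIs lIa pIs pIa kE kIs kIa * B = -1 := by
    rw [hB, sigmaMat, Matrix.fromBlocks_multiply]
    rw [Matrix.fromRows_mul, fromBlocks_mul_fromRows, fromRows_add, Matrix.fromBlocks_multiply]
    rw [smul_HF lE hE, smul_HF lIs hIs, smul_HF lIa hIa,
      gblock pIs lE lIs hE hIs, gblock pIa lE lIa hE hIa]
    simp only [Matrix.zero_mul, Matrix.mul_zero, add_zero, zero_add, Matrix.fromRows_zero]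
    ext (i | i | i) (j | j | j) <;>
      simp [Matrix.fromBlocks, Matrix.one_apply, Sum.elim_inl, Sum.elim_inr]
  have key2 : sigmaMat lE lIs lIa pIs pIa kE kIs kIa * (-B) = 1 := by
    rw [Matrix.mul_neg, key, neg_neg]
  have hinv : (sigmaMat lE lIs lIa pIs pIa kE kIs kIa)⁻¹ = -B :=
    Matrix.inv_eq_right_inv key2
  refine ⟨Matrix.isUnit_det_of_right_inverse key2, by rw [hinv, neg_neg], ?_⟩
  intro i j
  rw [hinv, neg_neg, hB]
  obtain ⟨hp1, _⟩ := hpIs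
  obtain ⟨hp2, _⟩ := hpIa
  rcases i with i | i | i <;> rcases j with j | j | j <;>
    simp [Matrix.fromBlocks, Fmat, Jmat] <;>
    first
      | positivity
      | (split <;> positivity)
end

section
/- Let Y be an n×n real matrix with nonnegative off-diagonal entries (Y_{ij} ≥ 0 for all i ≠ j). Then s(Y) < 0 (every complex eigenvalue of Y has strictly negative real part) if and only if Y is invertible and −Y⁻¹ is entrywise nonnegative. -/
open Matrix Polynomial Finset Filter

section Helpers

variable {n : ℕ}

lemma fun_entry_le_double_sum (f : Fin n → Fin n → ℝ) (h : ∀ i j, 0 ≤ f i j) (i j : Fin n) :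
    f i j ≤ ∑ a, ∑ b, f a b := by
  calc f i j ≤ ∑ b, f i b := Finset.single_le_sum (fun b _ => h i b) (Finset.mem_univ j)
    _ ≤ ∑ a, ∑ b, f a b :=
        Finset.single_le_sum (fun a _ => Finset.sum_nonneg fun b _ => h a b) (Finset.mem_univ i)

lemma mul_entry_nonneg {A B : Matrix (Fin n) (Fin n) ℝ} (hA : ∀ i j, 0 ≤ A i j)
    (hB : ∀ i j, 0 ≤ B i j) : ∀ i j, 0 ≤ (A * B) i j := fun i j => by
  rw [Matrix.mul_apply]
  exact Finset.sum_nonneg fun k _ => mul_nonneg (hA i k) (hB k j)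

lemma pow_entry_nonneg {B : Matrix (Fin n) (Fin n) ℝ} (hB : ∀ i j, 0 ≤ B i j) (N : ℕ) :
    ∀ i j, 0 ≤ (B ^ N) i j := by
  induction N with
  | zero => intro i j; by_cases h : i = j <;> simp [Matrix.one_apply, h]
  | succ N ih =>
    rw [pow_succ]
    exact mul_entry_nonneg ih hB

/-- Core positivity lemma: a fixed point `R = C + B * R` with nonnegative `B, C` and
`B` small is entrywise nonnegative. -/
lemma nonneg_of_fixpoint (B C R : Matrix (Fin n) (Fin n) ℝ)
    (hB : ∀ i j, 0 ≤ B i j) (hC : ∀ i j, 0 ≤ C i j)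
    (hfix : R = C + B * R) (b : ℝ) (hb0 : 0 ≤ b)
    (hBb : ∀ i j, B i j ≤ b) (hb : (n : ℝ) * b < 1) :
    ∀ i j, 0 ≤ R i j := by
  set r := ∑ a, ∑ c, |R a c| with hr
  have hrR : ∀ i j, |R i j| ≤ r :=
    fun i j => fun_entry_le_double_sum (fun a c => |R a c|) (fun a c => abs_nonneg _) i j
  have key : ∀ N : ℕ, R = (∑ k ∈ Finset.range N, B ^ k * C) + B ^ N * R := by
    intro N
    induction N with
    | zero => simp
    | succ N ih =>
      have h1 : B ^ N * R = B ^ N * C + B ^ (N + 1) * R := by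
        conv_lhs => rw [hfix]
        rw [Matrix.mul_add, pow_succ, Matrix.mul_assoc]
      rw [Finset.sum_range_succ]
      calc R = (∑ k ∈ Finset.range N, B ^ k * C) + B ^ N * R := ih
        _ = (∑ k ∈ Finset.range N, B ^ k * C) + (B ^ N * C + B ^ (N+1) * R) := by rw [← h1]
        _ = (∑ k ∈ Finset.range N, B ^ k * C + B ^ N * C) + B ^ (N+1) * R := by abel
  have hrem : ∀ N : ℕ, ∀ i j, |(B ^ N * R) i j| ≤ ((n : ℝ) * b) ^ N * r := by
    intro N
    induction N with
    | zero => intro i j; simpa using hrR i j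
    | succ N ih =>
      intro i j
      have hify : (B ^ (N + 1) * R) i j = ∑ k, B i k * (B ^ N * R) k j := by
        rw [pow_succ', Matrix.mul_assoc, Matrix.mul_apply]
      rw [hify]
      have hnb0 : 0 ≤ (n : ℝ) * b := mul_nonneg (Nat.cast_nonneg n) hb0
      have hr0 : 0 ≤ r := Finset.sum_nonneg fun a _ => Finset.sum_nonneg fun c _ => abs_nonneg _
      calc |∑ k, B i k * (B ^ N * R) k j| ≤ ∑ k, |B i k * (B ^ N * R) k j| :=
            Finset.abs_sum_le_sum_abs _ _
        _ ≤ ∑ _k : Fin n, b * (((n : ℝ) * b) ^ N * r) := by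
            refine Finset.sum_le_sum fun k _ => ?_
            rw [abs_mul, abs_of_nonneg (hB i k)]
            exact mul_le_mul (hBb i k) (ih k j) (abs_nonneg _)
              hb0
        _ = (n : ℝ) * (b * (((n : ℝ) * b) ^ N * r)) := by
            rw [Finset.sum_const, Finset.card_univ, Fintype.card_fin, nsmul_eq_mul]
        _ = ((n : ℝ) * b) ^ (N + 1) * r := by ring
  intro i j
  have hge : ∀ N : ℕ, -(((n : ℝ) * b) ^ N * r) ≤ R i j := by
    intro N
    have h1 : R i j = (∑ k ∈ Finset.range N, B ^ k * C) i j + (B ^ N * R) i j := by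
      conv_lhs => rw [key N]
      rw [Matrix.add_apply]
    have h2 : 0 ≤ (∑ k ∈ Finset.range N, B ^ k * C) i j := by
      simp only [Matrix.sum_apply]
      refine Finset.sum_nonneg fun k _ => ?_
      · exact mul_entry_nonneg (pow_entry_nonneg hB k) hC i j
    have h3 := (abs_le.mp (hrem N i j)).1
    linarith
  have hlim : Tendsto (fun N : ℕ => -(((n : ℝ) * b) ^ N * r)) atTop (nhds 0) := by
    have h0 : Tendsto (fun N : ℕ => ((n : ℝ) * b) ^ N) atTop (nhds 0) :=
      tendsto_pow_atTop_nhds_zero_of_lt_one (mul_nonneg (Nat.cast_nonneg n) hb0) hb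
    simpa using (h0.mul_const r).neg
  exact le_of_tendsto_of_tendsto' hlim tendsto_const_nhds hge

lemma eval_charpoly'' {R : Type*} [CommRing R] (M : Matrix (Fin n) (Fin n) R) (t : R) :
    M.charpoly.eval t = (t • (1 : Matrix (Fin n) (Fin n) R) - M).det := by
  have hmap : (charmatrix M).map (evalRingHom t) = t • (1 : Matrix (Fin n) (Fin n) R) - M := by
    ext i j
    by_cases h : i = j
    · subst h
      simp [charmatrix_apply_eq, Matrix.smul_apply, Matrix.one_apply, smul_eq_mul]
    · simp [charmatrix_apply_ne _ _ _ h, Matrix.smul_apply, Matrix.one_apply_ne h, h]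
  rw [Matrix.charpoly, ← coe_evalRingHom, RingHom.map_det]
  rw [show (charmatrix M).map (⇑(evalRingHom t)) = (evalRingHom t).mapMatrix (charmatrix M) from rfl] at hmap
  rw [hmap]

lemma real_mem_eigSet {Y : Matrix (Fin n) (Fin n) ℝ} {t : ℝ} :
    ((t : ℂ) ∈ eigSet Y) ↔ (t • (1 : Matrix (Fin n) (Fin n) ℝ) - Y).det = 0 := by
  have h1 : ((Y.map (algebraMap ℝ ℂ)).charpoly).eval (t : ℂ)
      = algebraMap ℝ ℂ (Y.charpoly.eval t) := by
    rw [Matrix.charpoly_map, eval_map, show ((t : ℂ)) = algebraMap ℝ ℂ t from rfl,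
      eval₂_at_apply]
  have : ((t : ℂ) ∈ eigSet Y) ↔ ((Y.map (algebraMap ℝ ℂ)).charpoly).eval (t : ℂ) = 0 :=
    Iff.rfl
  rw [this, h1, _root_.map_eq_zero, eval_charpoly'']

end Helpers

set_option maxHeartbeats 1000000 in
/-- For a real matrix `Y` with nonnegative off-diagonal entries,
`s(Y) < 0` (every eigenvalue has strictly negative real part) iff `Y` is invertible and
`-Y⁻¹` is entrywise nonnegative. -/
theorem stmt10 {n : ℕ} (Y : Matrix (Fin n) (Fin n) ℝ)
    (hYoffdiag : ∀ i j, i ≠ j → 0 ≤ Y i j) :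
    (∀ z ∈ eigSet Y, z.re < 0) ↔ (IsUnit Y.det ∧ ∀ i j, 0 ≤ (-Y⁻¹) i j) := by
  constructor
  · intro H
    have hdet0 : ∀ t : ℝ, 0 ≤ t → IsUnit (t • (1 : Matrix (Fin n) (Fin n) ℝ) - Y).det := by
      intro t ht
      rw [isUnit_iff_ne_zero]
      intro h0
      have h1 := H (t : ℂ) (real_mem_eigSet.mpr h0)
      rw [Complex.ofReal_re] at h1
      linarith
    have hdetY : IsUnit Y.det := by
      have h0 := hdet0 0 le_rfl
      rw [zero_smul, zero_sub, Matrix.det_neg] at h0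
      rw [isUnit_iff_ne_zero] at h0 ⊢
      intro h; exact h0 (by rw [h, mul_zero])
    set c : ℝ := 1 + ∑ i, |Y i i| with hc
    have hc1 : 1 ≤ c := by
      have : (0:ℝ) ≤ ∑ i, |Y i i| := Finset.sum_nonneg fun i _ => abs_nonneg _
      linarith
    set P : Matrix (Fin n) (Fin n) ℝ := Y + c • 1 with hP
    have hPnn : ∀ i j, 0 ≤ P i j := by
      intro i j
      by_cases h : i = j
      · subst h
        have h1 : |Y i i| ≤ ∑ k, |Y k k| :=
          Finset.single_le_sum (f := fun k => |Y k k|) (fun k _ => abs_nonneg _)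
            (Finset.mem_univ i)
        have h2 := neg_abs_le (Y i i)
        simp only [hP, Matrix.add_apply, Matrix.smul_apply, Matrix.one_apply_eq, smul_eq_mul,
          mul_one]
        linarith
      · simp only [hP, Matrix.add_apply, Matrix.smul_apply, Matrix.one_apply_ne h, smul_eq_mul,
          mul_zero, add_zero]
        exact hYoffdiag i j h
    set pm : ℝ := ∑ a, ∑ b, P a b with hpmdef
    have hpm : ∀ i j, P i j ≤ pm := fun i j => fun_entry_le_double_sum _ hPnn i j
    have hpm0 : 0 ≤ pm := Finset.sum_nonneg fun a _ => Finset.sum_nonneg fun b _ => hPnn a b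
    set Rm : ℝ → Matrix (Fin n) (Fin n) ℝ := fun t => (t • (1 : Matrix (Fin n) (Fin n) ℝ) - Y)⁻¹
      with hRmdef
    have hmul : ∀ t : ℝ, 0 ≤ t → (t • (1 : Matrix (Fin n) (Fin n) ℝ) - Y) * Rm t = 1 :=
      fun t ht => Matrix.mul_nonsing_inv _ (hdet0 t ht)
    have hmul' : ∀ t : ℝ, 0 ≤ t → Rm t * (t • (1 : Matrix (Fin n) (Fin n) ℝ) - Y) = 1 :=
      fun t ht => Matrix.nonsing_inv_mul _ (hdet0 t ht)
    have hdecomp : ∀ t : ℝ, 0 ≤ t →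
        Rm t = (t + c)⁻¹ • (1 : Matrix (Fin n) (Fin n) ℝ) + ((t + c)⁻¹ • P) * Rm t := by
      intro t ht
      have htc : (0:ℝ) < t + c := by linarith
      have h2 : t • (1 : Matrix (Fin n) (Fin n) ℝ) - Y = (t + c) • 1 - P := by
        rw [hP, add_smul]; abel
      have h1 : (t + c) • Rm t = 1 + P * Rm t := by
        have h3 := hmul t ht
        rw [h2, Matrix.sub_mul, smul_mul_assoc, one_mul, sub_eq_iff_eq_add] at h3
        rw [h3]
      calc Rm t = (t + c)⁻¹ • ((t + c) • Rm t) := by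
            rw [smul_smul, inv_mul_cancel₀ htc.ne', one_smul]
        _ = (t + c)⁻¹ • (1 + P * Rm t) := by rw [h1]
        _ = (t + c)⁻¹ • (1 : Matrix (Fin n) (Fin n) ℝ) + ((t + c)⁻¹ • P) * Rm t := by
            rw [smul_add, smul_mul_assoc]
    set S : Set ℝ := {t | 0 ≤ t ∧ ∀ i j, 0 ≤ Rm t i j} with hSdef
    have hmem : ∀ t : ℝ, 0 ≤ t → (n : ℝ) * ((t + c)⁻¹ * pm) < 1 → t ∈ S := by
      intro t ht hsmall
      have htc : (0:ℝ) < t + c := by linarith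
      refine ⟨ht, ?_⟩
      refine nonneg_of_fixpoint ((t + c)⁻¹ • P) ((t + c)⁻¹ • (1 : Matrix (Fin n) (Fin n) ℝ))
        (Rm t) ?_ ?_ (hdecomp t ht) ((t + c)⁻¹ * pm) ?_ ?_ hsmall
      · intro i j
        simp only [Matrix.smul_apply, smul_eq_mul]
        exact mul_nonneg (inv_nonneg.mpr htc.le) (hPnn i j)
      · intro i j
        simp only [Matrix.smul_apply, smul_eq_mul]
        refine mul_nonneg (inv_nonneg.mpr htc.le) ?_
        by_cases h : i = j <;> simp [Matrix.one_apply, h]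
      · exact mul_nonneg (inv_nonneg.mpr htc.le) hpm0
      · intro i j
        simp only [Matrix.smul_apply, smul_eq_mul]
        exact mul_le_mul_of_nonneg_left (hpm i j) (inv_nonneg.mpr htc.le)
    have hSne : S.Nonempty := by
      refine ⟨(n : ℝ) * pm, hmem _ (mul_nonneg (Nat.cast_nonneg n) hpm0) ?_⟩
      have htc : (0:ℝ) < (n : ℝ) * pm + c := by positivity
      rw [show (n : ℝ) * (((n : ℝ) * pm + c)⁻¹ * pm) = ((n:ℝ) * pm) / ((n:ℝ)*pm + c) by
        field_simp]
      rw [div_lt_one htc]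
      linarith
    have hcont : ∀ t : ℝ, 0 ≤ t → ∀ i j, ContinuousAt (fun s => Rm s i j) t := by
      intro t ht i j
      have hfun : (fun s => Rm s i j) = fun s : ℝ =>
          ((s • (1 : Matrix (Fin n) (Fin n) ℝ) - Y).det)⁻¹ *
            ((s • (1 : Matrix (Fin n) (Fin n) ℝ) - Y).adjugate i j) := by
        funext s
        rw [hRmdef]
        simp only [Matrix.inv_def, Matrix.smul_apply, smul_eq_mul, Ring.inverse_eq_inv']
      rw [hfun]
      have hgc : Continuous fun s : ℝ => s • (1 : Matrix (Fin n) (Fin n) ℝ) - Y :=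
        (continuous_id.smul continuous_const).sub continuous_const
      have hdetc : Continuous fun s : ℝ => (s • (1 : Matrix (Fin n) (Fin n) ℝ) - Y).det :=
        hgc.matrix_det
      have hadjc : Continuous fun s : ℝ =>
          (s • (1 : Matrix (Fin n) (Fin n) ℝ) - Y).adjugate i j :=
        (continuous_apply j).comp ((continuous_apply i).comp hgc.matrix_adjugate)
      exact (hdetc.continuousAt.inv₀ (hdet0 t ht).ne_zero).mul hadjc.continuousAt
    have hbdd : BddBelow S := ⟨0, fun t ht => ht.1⟩
    set a := sInf S with ha
    have ha0 : 0 ≤ a := le_csInf hSne fun t ht => ht.1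
    obtain ⟨u, -, hu_t, hu_mem⟩ := exists_seq_tendsto_sInf hSne hbdd
    have haS : ∀ i j, 0 ≤ Rm a i j := by
      intro i j
      have hcomp : Tendsto (fun k => Rm (u k) i j) atTop (nhds (Rm a i j)) :=
        ((hcont a ha0 i j).tendsto.comp hu_t)
      exact le_of_tendsto_of_tendsto' tendsto_const_nhds hcomp fun k => (hu_mem k).2 i j
    have ha_eq : a = 0 := by
      by_contra hne0
      have hapos : 0 < a := ha0.lt_of_ne (Ne.symm hne0)
      set K : ℝ := ∑ i, ∑ j, Rm a i j with hK
      have hK0 : 0 ≤ K := Finset.sum_nonneg fun i _ => Finset.sum_nonneg fun j _ => haS i j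
      have hKb : ∀ i j, Rm a i j ≤ K := fun i j => fun_entry_le_double_sum _ haS i j
      set ε : ℝ := ((n : ℝ) * K + 1)⁻¹ with hε
      have hε0 : 0 < ε := by positivity
      set s := max 0 (a - ε / 2) with hs
      have hs0 : 0 ≤ s := le_max_left _ _
      have hsa : s < a := max_lt hapos (by linarith)
      have hd1 : 0 ≤ a - s := by linarith
      have hd2 : a - s ≤ ε / 2 := by
        have := le_max_right 0 (a - ε / 2)
        rw [hs]; simp only [sub_le_iff_le_add]
        have h := le_max_right 0 (a - ε / 2)
        linarith [h]
      have hres : Rm s = Rm a + ((a - s) • Rm a) * Rm s := by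
        have h1 : a • (1 : Matrix (Fin n) (Fin n) ℝ) - Y
            = (s • (1 : Matrix (Fin n) (Fin n) ℝ) - Y) + (a - s) • 1 := by
          rw [sub_smul]; abel
        calc Rm s = 1 * Rm s := (one_mul _).symm
          _ = (Rm a * (a • (1 : Matrix (Fin n) (Fin n) ℝ) - Y)) * Rm s := by
              rw [hmul' a ha0]
          _ = (Rm a * ((s • (1 : Matrix (Fin n) (Fin n) ℝ) - Y) + (a - s) • 1)) * Rm s := by
              rw [← h1]
          _ = (Rm a * (s • (1 : Matrix (Fin n) (Fin n) ℝ) - Y)) * Rm s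
                + ((a - s) • Rm a) * Rm s := by
              rw [Matrix.mul_add, Matrix.add_mul, mul_smul_comm, mul_one, smul_mul_assoc]
          _ = Rm a + ((a - s) • Rm a) * Rm s := by
              rw [Matrix.mul_assoc, hmul s hs0, mul_one]
      have hsmall : (n : ℝ) * ((a - s) * K) < 1 := by
        have h1 : (n : ℝ) * K * ε < 1 := by
          rw [hε]
          rw [show (n : ℝ) * K * ((n:ℝ)*K + 1)⁻¹ = ((n:ℝ)*K) / ((n:ℝ)*K + 1) from rfl]
          rw [div_lt_one (by positivity)]
          linarith
        have h2 : (n : ℝ) * ((a - s) * K) ≤ (n : ℝ) * K * (ε / 2) := by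
          have : (0:ℝ) ≤ (n : ℝ) * K := by positivity
          nlinarith
        nlinarith
      have hsS : s ∈ S := by
        refine ⟨hs0, ?_⟩
        refine nonneg_of_fixpoint ((a - s) • Rm a) (Rm a) (Rm s) ?_ haS hres
          ((a - s) * K) (mul_nonneg hd1 hK0) ?_ hsmall
        · intro i j
          simp only [Matrix.smul_apply, smul_eq_mul]
          exact mul_nonneg hd1 (haS i j)
        · intro i j
          simp only [Matrix.smul_apply, smul_eq_mul]
          exact mul_le_mul_of_nonneg_left (hKb i j) hd1
      exact absurd (csInf_le hbdd hsS) (not_le.mpr hsa)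
    have hneg : (-Y)⁻¹ = -Y⁻¹ := by
      refine Matrix.inv_eq_right_inv ?_
      rw [Matrix.neg_mul, Matrix.mul_neg, neg_neg, Matrix.mul_nonsing_inv _ hdetY]
    refine ⟨hdetY, fun i j => ?_⟩
    have h0 := haS i j
    rw [ha_eq] at h0
    have : Rm 0 = -Y⁻¹ := by
      rw [hRmdef]
      simp only [zero_smul, zero_sub]
      exact hneg
    rwa [this] at h0
  · rintro ⟨hdetY, hinv⟩ z hz
    set d : Fin n → ℝ := (-Y⁻¹) *ᵥ (fun _ => 1) with hd
    have hd0 : ∀ i, 0 ≤ d i := by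
      intro i
      rw [hd]
      simp only [Matrix.mulVec, dotProduct, mul_one]
      exact Finset.sum_nonneg fun j _ => hinv i j
    have hYd' : ∀ i, ∑ j, Y i j * d j = -1 := by
      have hYd : Y *ᵥ d = fun _ => (-1 : ℝ) := by
        rw [hd, Matrix.mulVec_mulVec]
        have hmm : Y * (-Y⁻¹) = -1 := by
          rw [Matrix.mul_neg, Matrix.mul_nonsing_inv _ hdetY]
        rw [hmm]
        funext i
        rw [Matrix.neg_mulVec, Matrix.one_mulVec]
        simp
      intro i
      have := congrFun hYd i
      simpa [Matrix.mulVec, dotProduct] using this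
    have hdpos : ∀ i, 0 < d i := by
      intro i
      rcases (hd0 i).lt_or_eq with h | h
      · exact h
      · exfalso
        have h2 : 0 ≤ ∑ j, Y i j * d j := by
          refine Finset.sum_nonneg fun j _ => ?_
          by_cases hji : j = i
          · subst hji; rw [← h, mul_zero]
          · exact mul_nonneg (hYoffdiag i j (fun hij => hji hij.symm)) (hd0 j)
        have h1 := hYd' i
        linarith
    have hz2 : ((Y.map (algebraMap ℝ ℂ)).charpoly).eval z = 0 := hz
    rw [eval_charpoly''] at hz2
    obtain ⟨x, hx0, hxv⟩ := Matrix.exists_mulVec_eq_zero_iff.mpr hz2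
    have heig : ∀ i, ∑ j, (Y i j : ℂ) * x j = z * x i := by
      intro i
      have h1 := congrFun hxv i
      simp only [Matrix.sub_mulVec, Matrix.smul_mulVec, Matrix.one_mulVec,
        Pi.sub_apply, Pi.smul_apply, smul_eq_mul, Pi.zero_apply, sub_eq_zero] at h1
      rw [h1]
      simp [Matrix.mulVec, dotProduct, Matrix.map_apply]
    obtain ⟨i₁, hi₁⟩ := Function.ne_iff.mp hx0
    obtain ⟨i₀, -, hmax⟩ := Finset.exists_max_image Finset.univ
      (fun j => ‖x j‖ / d j) ⟨i₁, Finset.mem_univ i₁⟩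
    set m : ℝ := ‖x i₀‖ / d i₀ with hm
    have hm0 : 0 < m :=
      lt_of_lt_of_le (div_pos (norm_pos_iff.mpr hi₁) (hdpos i₁)) (hmax i₁ (Finset.mem_univ _))
    have hxb : ∀ j, ‖x j‖ ≤ m * d j := by
      intro j
      have h1 := hmax j (Finset.mem_univ j)
      calc ‖x j‖ = ‖x j‖ / d j * d j :=
            (div_mul_cancel₀ _ (hdpos j).ne').symm
        _ ≤ m * d j := mul_le_mul_of_nonneg_right h1 (hd0 j)
    have hxi₀ : ‖x i₀‖ = m * d i₀ := by
      rw [hm, div_mul_cancel₀ _ (hdpos i₀).ne']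
    have h1 : (z - (Y i₀ i₀ : ℂ)) * x i₀ = ∑ j ∈ Finset.univ.erase i₀, (Y i₀ j : ℂ) * x j := by
      have h2 := heig i₀
      rw [← Finset.sum_erase_add _ _ (Finset.mem_univ i₀)] at h2
      linear_combination -1 * h2
    have h3 : ‖z - (Y i₀ i₀ : ℂ)‖ * (m * d i₀)
        ≤ ∑ j ∈ Finset.univ.erase i₀, Y i₀ j * (m * d j) := by
      rw [← hxi₀, ← norm_mul, h1]
      refine le_trans (norm_sum_le _ _) (Finset.sum_le_sum fun j hj => ?_)
      rw [norm_mul, Complex.norm_real, Real.norm_eq_abs]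
      have hYij : 0 ≤ Y i₀ j := hYoffdiag i₀ j (Ne.symm (Finset.ne_of_mem_erase hj))
      rw [abs_of_nonneg hYij]
      exact mul_le_mul_of_nonneg_left (hxb j) hYij
    have h4 : ∑ j ∈ Finset.univ.erase i₀, Y i₀ j * (m * d j)
        = m * (-1 - Y i₀ i₀ * d i₀) := by
      have h5 := hYd' i₀
      rw [← Finset.sum_erase_add _ _ (Finset.mem_univ i₀)] at h5
      calc ∑ j ∈ Finset.univ.erase i₀, Y i₀ j * (m * d j)
          = m * ∑ j ∈ Finset.univ.erase i₀, Y i₀ j * d j := by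
            rw [Finset.mul_sum]
            exact Finset.sum_congr rfl fun j _ => by ring
        _ = m * (-1 - Y i₀ i₀ * d i₀) := by
            have : ∑ j ∈ Finset.univ.erase i₀, Y i₀ j * d j = -1 - Y i₀ i₀ * d i₀ := by
              linarith
            rw [this]
    have h6 : ‖z - (Y i₀ i₀ : ℂ)‖ * d i₀ ≤ -1 - Y i₀ i₀ * d i₀ := by
      have h7 : m * (‖z - (Y i₀ i₀ : ℂ)‖ * d i₀) ≤ m * (-1 - Y i₀ i₀ * d i₀) := by
        calc m * (‖z - (Y i₀ i₀ : ℂ)‖ * d i₀)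
            = ‖z - (Y i₀ i₀ : ℂ)‖ * (m * d i₀) := by ring
          _ ≤ ∑ j ∈ Finset.univ.erase i₀, Y i₀ j * (m * d j) := h3
          _ = m * (-1 - Y i₀ i₀ * d i₀) := h4
      exact le_of_mul_le_mul_left h7 hm0
    have h8 : z.re - Y i₀ i₀ ≤ ‖z - (Y i₀ i₀ : ℂ)‖ := by
      calc z.re - Y i₀ i₀ = (z - (Y i₀ i₀ : ℂ)).re := by simp
        _ ≤ ‖_‖ := Complex.re_le_norm _
    have h9 : (z.re - Y i₀ i₀) * d i₀ ≤ ‖z - (Y i₀ i₀ : ℂ)‖ * d i₀ :=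
      mul_le_mul_of_nonneg_right h8 (hd0 i₀)
    have h10 : z.re * d i₀ ≤ -1 := by nlinarith
    nlinarith [hdpos i₀]
end
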